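/- arXiv:1703.07525 — 8 statements merged into one kernel-verified Lean document; each statement's English description precedes it below -/
import Mathlib

section
/- Let n ≥ 1, N = (N_1,…,N_n) ∈ ℕ₀^n and I ⊆ {1,…,n}. Then the set 𝒥(I,N) is contained in {0,1,…,|N|+n}^n, where |N| = N_1 + ⋯ + N_n; in particular 𝒥(I,N) is a finite set. -/
/-- The set `K(N,α)` of the paper (the paper's `n` is `n + 1` here; index `j : Fin (n+1)`
corresponds to the paper's `j+1`, so the paper's `n + 1 - j` is `n + 1 - j.val`). -/
def Kset (n : ℕ) (N α : Fin (n + 1) → ℕ) : Finset (Fin (n + 1)) :=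
  Finset.univ.filter fun j =>
    (n + 1 - j.val) + ∑ i ∈ Finset.Ici j, N i = ∑ i ∈ Finset.Ici j, α i

/-- The set `L(N,α)` of the paper. -/
def Lset (n : ℕ) (N α : Fin (n + 1) → ℕ) : Finset (Fin (n + 1)) :=
  Finset.univ.filter fun j => N j + 1 ≤ α j

/-- The set `𝒥(I,N)` of the paper. -/
def Jset (n : ℕ) (I : Finset (Fin (n + 1))) (N : Fin (n + 1) → ℕ) : Set (Fin (n + 1) → ℕ) :=
  {α | Kset n N α = I ∧ (Lset n N α).card = I.card}

/-- `𝒥(I,N) ⊆ {0,…,|N|+n}^n` (here `|N| + n_paper = ∑ N + (n+1)`);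
in particular `𝒥(I,N)` is a finite set. -/
theorem stmt1 (n : ℕ) (N : Fin (n + 1) → ℕ) (I : Finset (Fin (n + 1))) :
    (Jset n I N ⊆ {α | ∀ j, α j ≤ (∑ j, N j) + (n + 1)}) ∧ (Jset n I N).Finite := by
  have hsub : Jset n I N ⊆ {α | ∀ j, α j ≤ (∑ j, N j) + (n + 1)} := by
    rintro α ⟨hK, hLcard⟩ j
    by_contra hbig
    push_neg at hbig
    have hmemK : ∀ k : Fin (n+1), k ∈ Kset n N α ↔
        (n + 1 - k.val) + ∑ i ∈ Finset.Ici k, N i = ∑ i ∈ Finset.Ici k, α i := by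
      intro k; simp [Kset]
    have hmemL : ∀ k : Fin (n+1), k ∈ Lset n N α ↔ N k + 1 ≤ α k := by
      intro k; simp [Lset]
    -- Step 1: for every k ∈ K, the set L ∩ [k, n] is nonempty
    have hne : ∀ k ∈ Kset n N α, (Lset n N α ∩ Finset.Ici k).Nonempty := by
      intro k hk
      rw [hmemK] at hk
      rw [Finset.nonempty_iff_ne_empty]
      intro hemp
      have hle : ∀ i ∈ Finset.Ici k, α i ≤ N i := by
        intro i hi
        by_contra h
        have hmem : i ∈ Lset n N α ∩ Finset.Ici k := by
          rw [Finset.mem_inter, hmemL]; exact ⟨by omega, hi⟩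
        rw [hemp] at hmem
        exact absurd hmem (Finset.notMem_empty i)
      have hsum : ∑ i ∈ Finset.Ici k, α i ≤ ∑ i ∈ Finset.Ici k, N i :=
        Finset.sum_le_sum hle
      have hkn : k.val ≤ n := Nat.lt_succ_iff.mp k.isLt
      omega
    -- the map g : K → L, sending k to the least element of L ∩ [k, n]
    set g : ∀ k ∈ Kset n N α, Fin (n+1) :=
      fun k hk => (Lset n N α ∩ Finset.Ici k).min' (hne k hk) with hg
    have hgmem : ∀ k hk, g k hk ∈ Lset n N α ∩ Finset.Ici k := fun k hk =>
      Finset.min'_mem _ _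
    -- Step 2: g is injective
    have key : ∀ k k' (hk : k ∈ Kset n N α) (hk' : k' ∈ Kset n N α),
        k < k' → g k hk ≠ g k' hk' := by
      intro k k' hk hk' hlt heq
      have hkk' : k ≤ k' := le_of_lt hlt
      have hm' := hgmem k' hk'
      rw [Finset.mem_inter, Finset.mem_Ici] at hm'
      have hptwise : ∀ i ∈ Finset.Ico k k', α i ≤ N i := by
        intro i hi
        rw [Finset.mem_Ico] at hi
        by_contra h
        have hiL : i ∈ Lset n N α ∩ Finset.Ici k := by
          rw [Finset.mem_inter, hmemL, Finset.mem_Ici]; exact ⟨by omega, hi.1⟩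
        have hle1 : g k hk ≤ i := Finset.min'_le _ i hiL
        rw [heq] at hle1
        exact absurd hi.2 (not_lt.mpr (le_trans hm'.2 hle1))
      have hdisj : Disjoint (Finset.Ico k k') (Finset.Ici k') := by
        rw [Finset.disjoint_left]
        intro a ha ha'
        rw [Finset.mem_Ico] at ha
        rw [Finset.mem_Ici] at ha'
        exact absurd ha.2 (not_lt.mpr ha')
      have hsplit : ∀ f : Fin (n+1) → ℕ,
          ∑ i ∈ Finset.Ici k, f i
            = ∑ i ∈ Finset.Ico k k', f i + ∑ i ∈ Finset.Ici k', f i := by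
        intro f
        have hu : Finset.Ico k k' ∪ Finset.Ici k' = Finset.Ici k := by
          ext a
          simp only [Finset.mem_union, Finset.mem_Ico, Finset.mem_Ici]
          constructor
          · rintro (⟨h1, _⟩ | h1)
            · exact h1
            · exact le_trans hkk' h1
          · intro h1
            rcases lt_or_ge a k' with h2 | h2
            · exact Or.inl ⟨h1, h2⟩
            · exact Or.inr h2
        rw [← hu, Finset.sum_union hdisj]
      rw [hmemK] at hk hk'
      rw [hsplit N, hsplit α] at hk
      have hS : ∑ i ∈ Finset.Ico k k', α i ≤ ∑ i ∈ Finset.Ico k k', N i :=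
        Finset.sum_le_sum hptwise
      have h1 : k.val < k'.val := hlt
      have h2 : k'.val ≤ n := Nat.lt_succ_iff.mp k'.isLt
      omega
    have hinj : ∀ k k' (hk : k ∈ Kset n N α) (hk' : k' ∈ Kset n N α),
        g k hk = g k' hk' → k = k' := by
      intro k k' hk hk' heq
      rcases lt_trichotomy k k' with h | h | h
      · exact absurd heq (key k k' hk hk' h)
      · exact h
      · exact absurd heq.symm (key k' k hk' hk h)
    -- Step 3: g is surjective onto L, since |L| = |K|
    have hcard : (Lset n N α).card ≤ (Kset n N α).card := by
      rw [hK]; omega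
    have hsurj := Finset.surj_on_of_inj_on_of_card_le g
      (fun k hk => (Finset.mem_inter.mp (hgmem k hk)).1)
      (fun k k' hk hk' => hinj k k' hk hk') hcard
    -- Step 4: j is in L, so j = g k for some k ∈ K; contradiction
    have hNj : N j ≤ ∑ j', N j' :=
      Finset.single_le_sum (fun i _ => Nat.zero_le _) (Finset.mem_univ j)
    have hjL : j ∈ Lset n N α := by rw [hmemL]; omega
    obtain ⟨k, hk, hjk⟩ := hsurj j hjL
    have hjIci : j ∈ Finset.Ici k := by
      rw [hjk]; exact (Finset.mem_inter.mp (hgmem k hk)).2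
    have hα : α j ≤ ∑ i ∈ Finset.Ici k, α i :=
      Finset.single_le_sum (fun i _ => Nat.zero_le _) hjIci
    have hN : ∑ i ∈ Finset.Ici k, N i ≤ ∑ j', N j' :=
      Finset.sum_le_sum_of_subset (Finset.subset_univ _)
    rw [hmemK] at hk
    have hkn : k.val ≤ n := Nat.lt_succ_iff.mp k.isLt
    omega
  refine ⟨hsub, Set.Finite.subset
    (Set.Finite.pi fun _ : Fin (n+1) => Set.finite_Iic ((∑ j, N j) + (n + 1))) ?_⟩
  intro α hα
  rw [Set.mem_univ_pi]
  intro i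
  exact hsub hα i
end

section
/- Let n ≥ 1, N = (N_1,…,N_n) ∈ ℕ₀^n and α = (α_1,…,α_n) ∈ ℕ₀^n. Then |L(N,α)| ≥ |K(N,α)|, i.e. the cardinality of the set L(N,α) is at least the cardinality of the set K(N,α). -/
lemma Kset_mem {n : ℕ} {N α : Fin (n + 1) → ℕ} {j : Fin (n + 1)} (hj : j ∈ Kset n N α) :
    (n + 1 - j.val) + ∑ i ∈ Finset.Ici j, N i = ∑ i ∈ Finset.Ici j, α i := by
  simpa [Kset] using hj

lemma Lset_inter_nonempty {n : ℕ} {N α : Fin (n + 1) → ℕ} {j : Fin (n + 1)}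
    (hj : j ∈ Kset n N α) : (Lset n N α ∩ Finset.Ici j).Nonempty := by
  by_contra h
  rw [Finset.not_nonempty_iff_eq_empty, Finset.eq_empty_iff_forall_notMem] at h
  have hle : ∀ i ∈ Finset.Ici j, α i ≤ N i := by
    intro i hi
    by_contra hlt
    exact h i (Finset.mem_inter.2 ⟨by simp [Lset]; omega, hi⟩)
  have := Finset.sum_le_sum hle
  have hK := Kset_mem hj
  have : j.val ≤ n := Nat.lt_succ_iff.mp j.isLt
  omega

lemma Lset_between {n : ℕ} {N α : Fin (n + 1) → ℕ} {j j' : Fin (n + 1)}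
    (hj : j ∈ Kset n N α) (hj' : j' ∈ Kset n N α) (hlt : j < j') :
    ∃ i ∈ Lset n N α, j ≤ i ∧ i < j' := by
  have hsplit : Finset.Ico j j' ∪ Finset.Ici j' = Finset.Ici j := by
    ext a
    simp only [Finset.mem_union, Finset.mem_Ico, Finset.mem_Ici, Fin.le_def, Fin.lt_def]
    omega
  have hdisj : Disjoint (Finset.Ico j j') (Finset.Ici j') := by
    rw [Finset.disjoint_left]
    intro a ha hb
    rw [Finset.mem_Ico] at ha
    rw [Finset.mem_Ici] at hb
    exact absurd hb (not_le.2 ha.2)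
  have hsumN : ∑ i ∈ Finset.Ico j j', N i + ∑ i ∈ Finset.Ici j', N i
      = ∑ i ∈ Finset.Ici j, N i := by
    rw [← Finset.sum_union hdisj, hsplit]
  have hsumα : ∑ i ∈ Finset.Ico j j', α i + ∑ i ∈ Finset.Ici j', α i
      = ∑ i ∈ Finset.Ici j, α i := by
    rw [← Finset.sum_union hdisj, hsplit]
  have hK := Kset_mem hj
  have hK' := Kset_mem hj'
  have hjn : j.val ≤ n := Nat.lt_succ_iff.mp j.isLt
  have hj'n : j'.val ≤ n := Nat.lt_succ_iff.mp j'.isLt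
  have hvlt : j.val < j'.val := hlt
  have hgt : ∑ i ∈ Finset.Ico j j', N i < ∑ i ∈ Finset.Ico j j', α i := by omega
  by_contra h
  push_neg at h
  have hle : ∀ i ∈ Finset.Ico j j', α i ≤ N i := by
    intro i hi
    rw [Finset.mem_Ico] at hi
    by_contra hlt2
    exact absurd (h i (by simp [Lset]; omega) hi.1) (not_le.2 hi.2)
  exact absurd (Finset.sum_le_sum hle) (not_le.2 hgt)

/-- `|L(N,α)| ≥ |K(N,α)|`. -/
theorem stmt2 (n : ℕ) (N α : Fin (n + 1) → ℕ) :
    (Kset n N α).card ≤ (Lset n N α).card := by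
  classical
  set f : Fin (n + 1) → Fin (n + 1) := fun j =>
    if h : (Lset n N α ∩ Finset.Ici j).Nonempty then (Lset n N α ∩ Finset.Ici j).min' h
    else j with hf
  have hmem : ∀ j ∈ Kset n N α, f j ∈ Lset n N α ∩ Finset.Ici j := by
    intro j hj
    have h := Lset_inter_nonempty hj
    simp only [hf, dif_pos h]
    exact Finset.min'_mem _ h
  apply Finset.card_le_card_of_injOn f
  · intro j hj; exact (Finset.mem_inter.1 (hmem j hj)).1
  · intro j hj j' hj' heq
    by_contra hne
    wlog hlt : j < j' generalizing j j'
    · exact this hj' hj heq.symm (Ne.symm hne) ((not_lt.1 hlt).lt_of_ne (Ne.symm hne))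
    obtain ⟨i, hiL, hji, hij'⟩ := Lset_between hj hj' hlt
    have h := Lset_inter_nonempty hj
    have hmin : f j ≤ i := by
      simp only [hf, dif_pos h]
      exact Finset.min'_le _ _ (Finset.mem_inter.2 ⟨hiL, Finset.mem_Ici.2 hji⟩)
    have hge : j' ≤ f j' := Finset.mem_Ici.1 (Finset.mem_inter.1 (hmem j' hj')).2
    rw [← heq] at hge
    exact absurd (lt_of_lt_of_le hij' hge) (not_lt.2 hmin)
end

section
/- Let n ≥ 1, N ∈ ℕ₀^n, α ∈ ℕ₀^n, and θ ∈ ℂ^n with θ_j + ⋯ + θ_n ≠ 0 for all j. With δ, U_δ, G_{N,α,θ} as defined, if |L(N,α)| > |K(N,α)| then the value at t = 0 of the analytic extension of G_{N,α,θ} to U_δ is 0. -/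
/-- Generalized binomial coefficient `binom(z, m) = z(z−1)⋯(z−m+1)/m!`. -/
noncomputable def cbinom (z : ℂ) (m : ℕ) : ℂ :=
  (∏ k ∈ Finset.range m, (z - (k : ℂ))) / (m.factorial : ℂ)

/-- `δ = (1/2) min_j { (1+|θ_j|)⁻¹, |θ_j+⋯+θ_n|⁻¹ }`. -/
noncomputable def deltaOf (n : ℕ) (θ : Fin (n + 1) → ℂ) : ℝ :=
  (1 / 2) *
    Finset.univ.inf' Finset.univ_nonempty fun j : Fin (n + 1) =>
      min (1 + ‖θ j‖)⁻¹ (‖∑ i ∈ Finset.Ici j, θ i‖)⁻¹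

/-- The function `G_{N,α,θ}` of the paper, defined a priori away from `t = 0`. -/
noncomputable def Gfun (n : ℕ) (N α : Fin (n + 1) → ℕ) (θ : Fin (n + 1) → ℂ) (t : ℂ) : ℂ :=
  (∏ j, cbinom ((N j : ℂ) - t * θ j) (α j)) /
    ∏ j : Fin (n + 1),
      (t - ((∑ i ∈ Finset.Ici j, (N i : ℂ)) + ((n : ℂ) + 1 - (j.val : ℂ)) -
            ∑ i ∈ Finset.Ici j, (α i : ℂ)) / ∑ i ∈ Finset.Ici j, θ i)

/-- The pole location for index `j`. -/
noncomputable def auxC (n : ℕ) (N α : Fin (n + 1) → ℕ) (θ : Fin (n + 1) → ℂ)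
    (j : Fin (n + 1)) : ℂ :=
  ((∑ i ∈ Finset.Ici j, (N i : ℂ)) + ((n : ℂ) + 1 - (j.val : ℂ)) -
      ∑ i ∈ Finset.Ici j, (α i : ℂ)) / ∑ i ∈ Finset.Ici j, θ i

/-- Numerator factor with one power of `t` extracted for `j ∈ L`. -/
noncomputable def auxg (n : ℕ) (N α : Fin (n + 1) → ℕ) (θ : Fin (n + 1) → ℂ)
    (j : Fin (n + 1)) (t : ℂ) : ℂ :=
  if j ∈ Lset n N α then
    (-(θ j) * ∏ k ∈ (Finset.range (α j)).erase (N j), ((N j : ℂ) - t * θ j - (k : ℂ))) /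
      ((α j).factorial : ℂ)
  else cbinom ((N j : ℂ) - t * θ j) (α j)

/-- Denominator factor with one power of `t` extracted for `j ∈ K`. -/
noncomputable def auxh (n : ℕ) (N α : Fin (n + 1) → ℕ) (θ : Fin (n + 1) → ℂ)
    (j : Fin (n + 1)) (t : ℂ) : ℂ :=
  if j ∈ Kset n N α then 1 else t - auxC n N α θ j

/-- if `|L(N,α)| > |K(N,α)|` then any analytic extension of `G_{N,α,θ}` to the
disk `U_δ` vanishes at `t = 0`. -/
theorem stmt4 (n : ℕ) (N α : Fin (n + 1) → ℕ) (θ : Fin (n + 1) → ℂ)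
    (hθ : ∀ j : Fin (n + 1), ∑ i ∈ Finset.Ici j, θ i ≠ 0)
    (hcard : (Kset n N α).card < (Lset n N α).card) :
    ∀ G : ℂ → ℂ,
      DifferentiableOn ℂ G (Metric.ball 0 (deltaOf n θ)) →
      (∀ t ∈ Metric.ball (0 : ℂ) (deltaOf n θ), t ≠ 0 → G t = Gfun n N α θ t) →
      G 0 = 0 := by
  intro G hG hGeq
  classical
  -- δ > 0
  have hδ : 0 < deltaOf n θ := by
    have hinf : (0 : ℝ) < Finset.univ.inf' Finset.univ_nonempty fun j : Fin (n + 1) =>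
        min (1 + ‖θ j‖)⁻¹ (‖∑ i ∈ Finset.Ici j, θ i‖)⁻¹ := by
      rw [Finset.lt_inf'_iff]
      intro j _
      refine lt_min (inv_pos.2 (by positivity)) (inv_pos.2 ?_)
      exact norm_pos_iff.2 (hθ j)
    have : deltaOf n θ = (1 / 2) * _ := rfl
    rw [this]
    linarith
  -- membership in K ↔ auxC vanishes
  have hc0 : ∀ j : Fin (n + 1), auxC n N α θ j = 0 ↔ j ∈ Kset n N α := by
    intro j
    have hj : j.val ≤ n + 1 := le_of_lt j.isLt
    have hcast : ((n : ℂ) + 1 - (j.val : ℂ)) = ((n + 1 - j.val : ℕ) : ℂ) := by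
      rw [Nat.cast_sub hj]; push_cast; ring
    rw [auxC, div_eq_zero_iff]
    simp only [hθ j, or_false]
    rw [hcast, sub_eq_zero, add_comm, Kset, Finset.mem_filter]
    simp only [Finset.mem_univ, true_and]
    constructor
    · intro h; exact_mod_cast h
    · intro h; exact_mod_cast h
  -- factor t out of numerator factors
  have hgfact : ∀ (j : Fin (n + 1)) (t : ℂ),
      cbinom ((N j : ℂ) - t * θ j) (α j) =
        t ^ (if j ∈ Lset n N α then 1 else 0) * auxg n N α θ j t := by
    intro j t
    by_cases hj : j ∈ Lset n N α
    · have hN : N j ∈ Finset.range (α j) := by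
        have := (Finset.mem_filter.mp hj).2
        exact Finset.mem_range.2 (by omega)
      rw [auxg, if_pos hj, if_pos hj, pow_one, cbinom, ← Finset.mul_prod_erase _ _ hN]
      have h1 : (N j : ℂ) - t * θ j - (N j : ℂ) = -(t * θ j) := by ring
      rw [h1]; ring
    · simp [auxg, hj]
  -- factor t out of denominator factors
  have hhfact : ∀ (j : Fin (n + 1)) (t : ℂ),
      t - auxC n N α θ j = t ^ (if j ∈ Kset n N α then 1 else 0) * auxh n N α θ j t := by
    intro j t
    by_cases hj : j ∈ Kset n N α
    · rw [auxh, if_pos hj, if_pos hj, pow_one, mul_one, (hc0 j).2 hj, sub_zero]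
    · simp [auxh, hj]
  -- factored form of Gfun
  have hGfun : ∀ t : ℂ, Gfun n N α θ t =
      (t ^ (Lset n N α).card * ∏ j, auxg n N α θ j t) /
        (t ^ (Kset n N α).card * ∏ j, auxh n N α θ j t) := by
    intro t
    rw [Gfun]
    congr 1
    · rw [Finset.prod_congr rfl fun j _ => hgfact j t, Finset.prod_mul_distrib,
        Finset.prod_pow_eq_pow_sum]
      congr 2
      rw [← Finset.card_filter, Lset]
      congr 1
      ext j
      simp [Lset]
    · rw [show (∏ j : Fin (n + 1),
          (t - ((∑ i ∈ Finset.Ici j, (N i : ℂ)) + ((n : ℂ) + 1 - (j.val : ℂ)) -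
            ∑ i ∈ Finset.Ici j, (α i : ℂ)) / ∑ i ∈ Finset.Ici j, θ i)) =
          ∏ j : Fin (n + 1), (t - auxC n N α θ j) from rfl,
        Finset.prod_congr rfl fun j _ => hhfact j t, Finset.prod_mul_distrib,
        Finset.prod_pow_eq_pow_sum]
      congr 2
      rw [← Finset.card_filter, Kset]
      congr 1
      ext j
      simp [Kset]
  -- simplified form for t ≠ 0
  have key : ∀ t : ℂ, t ≠ 0 → Gfun n N α θ t =
      t ^ ((Lset n N α).card - (Kset n N α).card) *
        ((∏ j, auxg n N α θ j t) / (∏ j, auxh n N α θ j t)) := by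
    intro t ht
    rw [hGfun t]
    have hKL : (Kset n N α).card ≤ (Lset n N α).card := le_of_lt hcard
    have hpow : t ^ (Lset n N α).card =
        t ^ (Kset n N α).card * t ^ ((Lset n N α).card - (Kset n N α).card) := by
      rw [← pow_add, Nat.add_sub_cancel' hKL]
    rw [hpow, mul_assoc, mul_div_mul_left _ _ (pow_ne_zero _ ht), mul_div_assoc]
  -- continuity of the pieces
  have hAc : Continuous fun t : ℂ => ∏ j, auxg n N α θ j t := by
    refine continuous_finset_prod _ fun j _ => ?_
    show Continuous fun t : ℂ => auxg n N α θ j t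
    by_cases hj : j ∈ Lset n N α
    · simp only [auxg, hj, if_true]
      exact (continuous_const.mul (continuous_finset_prod _ fun k _ => by continuity)).div_const _
    · simp only [auxg, hj, if_false, cbinom]
      exact (continuous_finset_prod _ fun k _ => by continuity).div_const _
  have hBc : Continuous fun t : ℂ => ∏ j, auxh n N α θ j t := by
    refine continuous_finset_prod _ fun j _ => ?_
    show Continuous fun t : ℂ => auxh n N α θ j t
    by_cases hj : j ∈ Kset n N α
    · simp only [auxh, hj, if_true]; exact continuous_const
    · simp only [auxh, hj, if_false]
      exact continuous_id.sub continuous_const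
  have hB0 : (∏ j, auxh n N α θ j 0) ≠ 0 := by
    rw [Finset.prod_ne_zero_iff]
    intro j _
    by_cases hj : j ∈ Kset n N α
    · simp [auxh, hj]
    · simp only [auxh, hj, if_false, zero_sub, neg_ne_zero]
      exact fun h => hj ((hc0 j).1 h)
  -- the limit of the simplified expression
  set d : ℕ := (Lset n N α).card - (Kset n N α).card with hd
  have hdpos : d ≠ 0 := by omega
  have htend : Filter.Tendsto
      (fun t : ℂ => t ^ d * ((∏ j, auxg n N α θ j t) / (∏ j, auxh n N α θ j t)))
      (nhds 0) (nhds 0) := by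
    have h1 : Filter.Tendsto (fun t : ℂ => t ^ d) (nhds 0) (nhds 0) := by
      simpa [zero_pow hdpos] using (continuous_pow d).tendsto (0 : ℂ)
    have h2 := ((hAc.tendsto 0).div (hBc.tendsto 0) hB0)
    simpa using h1.mul h2
  -- G tends to 0 along punctured neighborhoods of 0
  have hGt : Filter.Tendsto G (nhdsWithin 0 {(0 : ℂ)}ᶜ) (nhds 0) := by
    refine ((htend.mono_left nhdsWithin_le_nhds).congr' ?_)
    have hball : Metric.ball (0 : ℂ) (deltaOf n θ) ∈ nhdsWithin (0 : ℂ) {(0 : ℂ)}ᶜ :=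
      mem_nhdsWithin_of_mem_nhds (Metric.ball_mem_nhds _ hδ)
    filter_upwards [hball, self_mem_nhdsWithin] with t ht ht0
    rw [hGeq t ht ht0, key t ht0]
  -- G tends to G 0 along the same filter
  have hG0 : Filter.Tendsto G (nhdsWithin 0 {(0 : ℂ)}ᶜ) (nhds (G 0)) := by
    have hc := (hG.continuousOn 0 (Metric.mem_ball_self hδ))
    refine hc.tendsto.mono_left (nhdsWithin_le_of_mem ?_)
    exact mem_nhdsWithin_of_mem_nhds (Metric.ball_mem_nhds _ hδ)
  exact tendsto_nhds_unique hG0 hGt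
end

section
/- Let n ≥ 1, N ∈ ℕ₀^n, α ∈ ℕ₀^n, and θ ∈ ℂ^n with θ_j + ⋯ + θ_n ≠ 0 for all j. With δ, U_δ, G_{N,α,θ} as defined, if |L(N,α)| = |K(N,α)| then the value at t = 0 of the analytic extension of G_{N,α,θ} to U_δ equals [ (−1)^{n−|K(N,α)|} · ∏_{j ∈ L(N,α)} ( (−1)^{α_j − N_j} θ_j / ( α_j · binom(α_j − 1, N_j) ) ) · ∏_{j ∉ L(N,α)} binom(N_j, α_j) ] / [ ∏_{j ∉ K(N,α)} ( ((N_j+⋯+N_n) + (n+1−j) − (α_j+⋯+α_n)) / (θ_j+⋯+θ_n) ) ]. -/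
/- ### Auxiliary lemmas -/

lemma prod_range_sub_cast (m : ℕ) :
    ∏ k ∈ Finset.range m, ((m : ℂ) - (k : ℂ)) = (m.factorial : ℂ) := by
  induction m with
  | zero => simp
  | succ m ih =>
    rw [Finset.prod_range_succ']
    have h1 : ∀ k ∈ Finset.range m, (((m+1 : ℕ)) : ℂ) - ((k+1 : ℕ) : ℂ) = (m:ℂ) - k := by
      intro k _; push_cast; ring
    rw [Finset.prod_congr rfl h1, ih, Nat.factorial_succ]
    push_cast; ring

lemma prod_Ico_sub_cast (m D : ℕ) :
    ∏ k ∈ Finset.Ico (m+1) D, ((m : ℂ) - (k : ℂ)) =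
      (-1)^(D - 1 - m) * ((D - 1 - m).factorial : ℂ) := by
  rcases le_or_gt (m+1) D with h | h
  · rw [Finset.prod_Ico_eq_prod_range]
    have hD : D - (m+1) = D - 1 - m := by omega
    rw [hD]
    have h1 : ∀ i ∈ Finset.range (D-1-m), ((m:ℂ)) - ((m+1+i : ℕ):ℂ) = -((i:ℂ)+1) := by
      intro i _; push_cast; ring
    rw [Finset.prod_congr rfl h1]
    have h2 : ∀ i ∈ Finset.range (D-1-m), -((i:ℂ)+1) = (-1) * ((i:ℂ)+1) := by intros; ring
    rw [Finset.prod_congr rfl h2, Finset.prod_mul_distrib, Finset.prod_const,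
      Finset.card_range]
    congr 1
    exact_mod_cast congrArg (Nat.cast : ℕ → ℂ) (Finset.prod_range_add_one_eq_factorial (D-1-m))
  · have h0 : D - 1 - m = 0 := by omega
    rw [Finset.Ico_eq_empty (by omega), h0]
    simp

lemma prod_erase_sub_cast (m D : ℕ) (h : m < D) :
    ∏ k ∈ (Finset.range D).erase m, ((m : ℂ) - (k : ℂ)) =
      (-1)^(D - 1 - m) * (m.factorial : ℂ) * ((D - 1 - m).factorial : ℂ) := by
  have hset : (Finset.range D).erase m = Finset.range m ∪ Finset.Ico (m+1) D := by
    ext k; simp only [Finset.mem_erase, Finset.mem_range, Finset.mem_union, Finset.mem_Ico]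
    omega
  have hdisj : Disjoint (Finset.range m) (Finset.Ico (m+1) D) := by
    rw [Finset.disjoint_left]; intro k hk hk'
    simp only [Finset.mem_range] at hk; simp only [Finset.mem_Ico] at hk'; omega
  rw [hset, Finset.prod_union hdisj, prod_range_sub_cast, prod_Ico_sub_cast]
  ring

lemma cbinom_natCast (b a : ℕ) : cbinom (b : ℂ) a = (b.choose a : ℂ) := by
  unfold cbinom
  rcases lt_or_ge b a with h | h
  · rw [Finset.prod_eq_zero (Finset.mem_range.mpr h) (by simp), Nat.choose_eq_zero_of_lt h]
    simp
  · have h1 : ∀ k ∈ Finset.range a, (b:ℂ) - (k:ℂ) = ((b - k : ℕ) : ℂ) := by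
      intro k hk; simp only [Finset.mem_range] at hk
      have : k ≤ b := by omega
      push_cast [this]; ring
    rw [Finset.prod_congr rfl h1, ← Nat.cast_prod, ← Nat.descFactorial_eq_prod_range,
      Nat.descFactorial_eq_factorial_mul_choose, Nat.cast_mul,
      mul_div_cancel_left₀ _ (show (a.factorial:ℂ) ≠ 0 by exact_mod_cast a.factorial_ne_zero)]

lemma fval_zero (m D : ℕ) (h : m < D) (θ : ℂ) :
    (-θ) * ((-1:ℂ)^(D - 1 - m) * (m.factorial : ℂ) * ((D - 1 - m).factorial : ℂ)) /
        (D.factorial : ℂ)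
      = (-1:ℂ)^(D - m) * θ / ((D:ℂ) * ((D-1).choose m : ℂ)) := by
  have hD0 : (D:ℂ) ≠ 0 := by exact_mod_cast (by omega : D ≠ 0)
  have hCpos : 0 < (D-1).choose m := Nat.choose_pos (by omega)
  have hC0 : (((D-1).choose m : ℕ):ℂ) ≠ 0 := by exact_mod_cast hCpos.ne'
  have hfac : (D.factorial : ℂ) ≠ 0 := by exact_mod_cast D.factorial_ne_zero
  have key : D * ((D-1).choose m * (m.factorial * (D-1-m).factorial)) = D.factorial := by
    have h2 : (D-1).choose m * m.factorial * (D-1-m).factorial = (D-1).factorial :=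
      Nat.choose_mul_factorial_mul_factorial (show m ≤ D - 1 by omega)
    calc D * ((D-1).choose m * (m.factorial * (D-1-m).factorial))
        = D * ((D-1).choose m * m.factorial * (D-1-m).factorial) := by ring
      _ = D * (D-1).factorial := by rw [h2]
      _ = D.factorial := by
          conv_rhs => rw [show D = (D-1)+1 by omega]
          rw [Nat.factorial_succ]; congr 1; omega
  have keyC : (D:ℂ) * (((D-1).choose m : ℂ) * ((m.factorial:ℂ) * ((D-1-m).factorial:ℂ)))
      = (D.factorial : ℂ) := by exact_mod_cast congrArg (Nat.cast : ℕ → ℂ) key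
  have hexp : D - m = (D - 1 - m) + 1 := by omega
  rw [hexp, pow_succ]
  field_simp
  linear_combination (-θ) * keyC

lemma delta_pos (n : ℕ) (θ : Fin (n + 1) → ℂ)
    (hθ : ∀ j : Fin (n + 1), ∑ i ∈ Finset.Ici j, θ i ≠ 0) : 0 < deltaOf n θ := by
  unfold deltaOf
  apply mul_pos (by norm_num)
  rw [Finset.lt_inf'_iff]
  intro j _
  exact lt_min (inv_pos.mpr (by positivity))
    (inv_pos.mpr (norm_pos_iff.mpr (hθ j)))

lemma Kmem_iff (n : ℕ) (N α : Fin (n + 1) → ℕ) (j : Fin (n + 1)) :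
    j ∈ Kset n N α ↔
      (∑ i ∈ Finset.Ici j, (N i : ℂ)) + ((n : ℂ) + 1 - (j.val : ℂ)) -
        ∑ i ∈ Finset.Ici j, (α i : ℂ) = 0 := by
  have hj : j.val ≤ n := by omega
  rw [Kset, Finset.mem_filter]
  simp only [Finset.mem_univ, true_and]
  rw [sub_eq_zero]
  constructor
  · intro h
    rw [show ((n:ℂ) + 1 - (j.val:ℂ)) = ((n + 1 - j.val : ℕ) : ℂ) by
      rw [Nat.cast_sub (by omega)]; push_cast; ring]
    rw [← Nat.cast_sum, ← Nat.cast_sum, ← Nat.cast_add, ← h]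
    push_cast; ring
  · intro h
    have h2 : (((n + 1 - j.val) + ∑ i ∈ Finset.Ici j, N i : ℕ) : ℂ)
        = ((∑ i ∈ Finset.Ici j, α i : ℕ) : ℂ) := by
      rw [Nat.cast_add, Nat.cast_sub (by omega), Nat.cast_sum, Nat.cast_sum]
      push_cast
      rw [← h]; ring
    exact_mod_cast h2

lemma div_neg_one_pow_mul (A Q : ℂ) (k : ℕ) :
    A / ((-1:ℂ)^k * Q) = ((-1:ℂ)^k * A) / Q := by
  rcases Nat.even_or_odd k with hk | hk
  · rw [hk.neg_one_pow]; simp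
  · rw [hk.neg_one_pow, neg_one_mul, neg_one_mul, div_neg, neg_div]

/-- if `|L(N,α)| = |K(N,α)|` then any analytic extension of `G_{N,α,θ}` to the
disk `U_δ` takes at `t = 0` the stated explicit value. -/
theorem stmt5 (n : ℕ) (N α : Fin (n + 1) → ℕ) (θ : Fin (n + 1) → ℂ)
    (hθ : ∀ j : Fin (n + 1), ∑ i ∈ Finset.Ici j, θ i ≠ 0)
    (hcard : (Lset n N α).card = (Kset n N α).card) :
    ∀ G : ℂ → ℂ,
      DifferentiableOn ℂ G (Metric.ball 0 (deltaOf n θ)) →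
      (∀ t ∈ Metric.ball (0 : ℂ) (deltaOf n θ), t ≠ 0 → G t = Gfun n N α θ t) →
      G 0 =
        ((-1 : ℂ) ^ (n + 1 - (Kset n N α).card) *
            (∏ j ∈ Lset n N α,
              ((-1 : ℂ) ^ (α j - N j) * θ j / ((α j : ℂ) * ((α j - 1).choose (N j) : ℂ)))) *
            ∏ j ∈ (Lset n N α)ᶜ, ((N j).choose (α j) : ℂ)) /
          ∏ j ∈ (Kset n N α)ᶜ,
            (((∑ i ∈ Finset.Ici j, (N i : ℂ)) + ((n : ℂ) + 1 - (j.val : ℂ)) -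
                ∑ i ∈ Finset.Ici j, (α i : ℂ)) / ∑ i ∈ Finset.Ici j, θ i) := by
  intro G hG hGeq
  classical
  set c : Fin (n + 1) → ℂ := fun j =>
    ((∑ i ∈ Finset.Ici j, (N i : ℂ)) + ((n : ℂ) + 1 - (j.val : ℂ)) -
      ∑ i ∈ Finset.Ici j, (α i : ℂ)) / ∑ i ∈ Finset.Ici j, θ i with hc
  have hc0 : ∀ j, j ∈ Kset n N α ↔ c j = 0 := by
    intro j
    rw [Kmem_iff n N α j, hc]
    constructor
    · intro h; simp [h]
    · intro h
      exact (div_eq_zero_iff.mp h).resolve_right (hθ j)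
  -- the auxiliary regular part `f j t` with `t * f j t = cbinom (N j - t θ j) (α j)` on L
  set f : Fin (n + 1) → ℂ → ℂ := fun j t =>
    (-θ j) * (∏ k ∈ (Finset.range (α j)).erase (N j), ((N j : ℂ) - t * θ j - (k : ℂ))) /
      ((α j).factorial : ℂ) with hfdef
  have hLmem : ∀ j, j ∈ Lset n N α ↔ N j < α j := by
    intro j; rw [Lset, Finset.mem_filter]
    simp only [Finset.mem_univ, true_and]; omega
  have hf : ∀ j, N j < α j → ∀ t : ℂ,
      cbinom ((N j : ℂ) - t * θ j) (α j) = t * f j t := by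
    intro j hj t
    rw [cbinom, hfdef]
    rw [← Finset.mul_prod_erase _ _ (Finset.mem_range.mpr hj)]
    have : ((N j : ℂ) - t * θ j - (N j : ℂ)) = -(t * θ j) := by ring
    rw [this]
    field_simp
  -- the regular extension H
  set H : ℂ → ℂ := fun t =>
    ((∏ j ∈ Lset n N α, f j t) *
        ∏ j ∈ (Lset n N α)ᶜ, cbinom ((N j : ℂ) - t * θ j) (α j)) /
      ∏ j ∈ (Kset n N α)ᶜ, (t - c j) with hHdef
  -- Gfun = H off 0
  have hGfunH : ∀ t : ℂ, t ≠ 0 → Gfun n N α θ t = H t := by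
    intro t ht
    rw [Gfun, hHdef]
    have hnum : (∏ j, cbinom ((N j : ℂ) - t * θ j) (α j))
        = t ^ (Lset n N α).card *
          ((∏ j ∈ Lset n N α, f j t) *
            ∏ j ∈ (Lset n N α)ᶜ, cbinom ((N j : ℂ) - t * θ j) (α j)) := by
      rw [← Finset.prod_mul_prod_compl (Lset n N α)]
      rw [Finset.prod_congr rfl (fun j hj => hf j ((hLmem j).mp hj) t),
        Finset.prod_mul_distrib, Finset.prod_const]
      ring
    have hden : (∏ j : Fin (n+1), (t - c j))
        = t ^ (Kset n N α).card * ∏ j ∈ (Kset n N α)ᶜ, (t - c j) := by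
      rw [← Finset.prod_mul_prod_compl (Kset n N α)]
      congr 1
      rw [Finset.prod_congr rfl (fun j hj => by rw [(hc0 j).mp hj, sub_zero]),
        Finset.prod_const]
    rw [show (∏ j : Fin (n+1),
        (t - ((∑ i ∈ Finset.Ici j, (N i : ℂ)) + ((n : ℂ) + 1 - (j.val : ℂ)) -
            ∑ i ∈ Finset.Ici j, (α i : ℂ)) / ∑ i ∈ Finset.Ici j, θ i))
        = ∏ j : Fin (n+1), (t - c j) from rfl]
    rw [hnum, hden, hcard,
      mul_div_mul_left _ _ (pow_ne_zero _ ht)]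
  -- positivity of δ and continuity
  have hδ := delta_pos n θ hθ
  have h0mem : (0:ℂ) ∈ Metric.ball (0:ℂ) (deltaOf n θ) := by
    simp [Metric.mem_ball, hδ]
  have hGc : ContinuousAt G 0 :=
    (hG.differentiableAt (Metric.isOpen_ball.mem_nhds h0mem)).continuousAt
  have hden0 : (∏ j ∈ (Kset n N α)ᶜ, ((0:ℂ) - c j)) ≠ 0 := by
    apply Finset.prod_ne_zero_iff.mpr
    intro j hj
    rw [zero_sub, neg_ne_zero]
    exact fun h => (Finset.mem_compl.mp hj) ((hc0 j).mpr h)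
  have hHc : ContinuousAt H 0 := by
    rw [hHdef]
    have h1 : Continuous (fun t : ℂ =>
        (∏ j ∈ Lset n N α, f j t) *
          ∏ j ∈ (Lset n N α)ᶜ, cbinom ((N j : ℂ) - t * θ j) (α j)) := by
      apply Continuous.mul
      · apply continuous_finset_prod
        intro j _
        rw [hfdef]
        apply Continuous.div_const
        apply Continuous.mul continuous_const
        apply continuous_finset_prod
        intro k _
        fun_prop
      · apply continuous_finset_prod
        intro j _
        rw [show (fun t : ℂ => cbinom ((N j : ℂ) - t * θ j) (α j))
            = fun t : ℂ => (∏ k ∈ Finset.range (α j), ((N j : ℂ) - t * θ j - (k:ℂ))) /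
              ((α j).factorial : ℂ) from rfl]
        apply Continuous.div_const
        apply continuous_finset_prod
        intro k _
        fun_prop
    have h2 : Continuous (fun t : ℂ => ∏ j ∈ (Kset n N α)ᶜ, (t - c j)) := by
      apply continuous_finset_prod
      intro j _
      fun_prop
    exact ContinuousAt.div h1.continuousAt h2.continuousAt hden0
  -- G 0 = H 0
  have hGH0 : G 0 = H 0 := by
    have heq : G =ᶠ[nhdsWithin (0:ℂ) {(0:ℂ)}ᶜ] H := by
      have hb : Metric.ball (0:ℂ) (deltaOf n θ) ∈ nhdsWithin (0:ℂ) {(0:ℂ)}ᶜ :=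
        nhdsWithin_le_nhds (Metric.isOpen_ball.mem_nhds h0mem)
      filter_upwards [hb, self_mem_nhdsWithin] with t ht ht'
      rw [hGeq t ht ht', hGfunH t ht']
    exact tendsto_nhds_unique
      ((hGc.tendsto.mono_left nhdsWithin_le_nhds).congr' heq)
      (hHc.tendsto.mono_left nhdsWithin_le_nhds)
  rw [hGH0, hHdef]
  -- compute H 0
  have hL0 : ∏ j ∈ Lset n N α, f j 0
      = ∏ j ∈ Lset n N α,
          ((-1 : ℂ) ^ (α j - N j) * θ j / ((α j : ℂ) * ((α j - 1).choose (N j) : ℂ))) := by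
    apply Finset.prod_congr rfl
    intro j hj
    have hj' : N j < α j := (hLmem j).mp hj
    rw [hfdef]
    simp only [zero_mul, sub_zero]
    rw [prod_erase_sub_cast (N j) (α j) hj']
    exact fval_zero (N j) (α j) hj' (θ j)
  have hLc0 : ∏ j ∈ (Lset n N α)ᶜ, cbinom ((N j : ℂ) - 0 * θ j) (α j)
      = ∏ j ∈ (Lset n N α)ᶜ, ((N j).choose (α j) : ℂ) := by
    apply Finset.prod_congr rfl
    intro j _
    rw [show ((N j : ℂ) - 0 * θ j) = (N j : ℂ) by ring, cbinom_natCast]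
  have hK0 : ∏ j ∈ (Kset n N α)ᶜ, ((0:ℂ) - c j)
      = (-1:ℂ) ^ (n + 1 - (Kset n N α).card) * ∏ j ∈ (Kset n N α)ᶜ, c j := by
    rw [Finset.prod_congr rfl (fun j _ => by rw [zero_sub, neg_eq_neg_one_mul]),
      Finset.prod_mul_distrib, Finset.prod_const, Finset.card_compl, Fintype.card_fin]
  simp only []
  rw [hL0, hLc0, hK0, div_neg_one_pow_mul, ← mul_assoc]
end

section
/- Let n ≥ 1, N ∈ ℕ₀^n and α ∈ ℕ₀^n. If |L(N,α)| = |K(N,α)| then α ∈ 𝒥(K(N,α), N), and in particular α ∈ {0,1,…,|N|+n}^n where |N| = N_1 + ⋯ + N_n. -/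
lemma mem_Kset {n : ℕ} {N α : Fin (n + 1) → ℕ} {j : Fin (n + 1)} :
    j ∈ Kset n N α ↔ (n + 1 - j.val) + ∑ i ∈ Finset.Ici j, N i = ∑ i ∈ Finset.Ici j, α i := by
  simp [Kset]

lemma mem_Lset {n : ℕ} {N α : Fin (n + 1) → ℕ} {j : Fin (n + 1)} :
    j ∈ Lset n N α ↔ N j + 1 ≤ α j := by
  simp [Lset]

-- L ∩ Ici k nonempty for k ∈ K
lemma Lset_Ici_nonempty {n : ℕ} {N α : Fin (n + 1) → ℕ} {k : Fin (n + 1)}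
    (hk : k ∈ Kset n N α) : ((Lset n N α) ∩ Finset.Ici k).Nonempty := by
  rw [mem_Kset] at hk
  by_contra h
  rw [Finset.not_nonempty_iff_eq_empty, Finset.eq_empty_iff_forall_notMem] at h
  have hle : ∑ i ∈ Finset.Ici k, α i ≤ ∑ i ∈ Finset.Ici k, N i := by
    apply Finset.sum_le_sum
    intro i hi
    have := h i
    simp [mem_Lset, hi] at this
    omega
  have : k.val ≤ n := by omega
  omega

-- between two K elements there is an L element
lemma exists_L_between {n : ℕ} {N α : Fin (n + 1) → ℕ} {k k' : Fin (n + 1)}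
    (hk : k ∈ Kset n N α) (hk' : k' ∈ Kset n N α) (hlt : k < k') :
    ∃ i ∈ Lset n N α, k ≤ i ∧ i < k' := by
  rw [mem_Kset] at hk hk'
  have hsplit : Finset.Ico k k' ∪ Finset.Ici k' = Finset.Ici k := by
    ext i
    simp only [Finset.mem_union, Finset.mem_Ico, Finset.mem_Ici, Fin.le_def, Fin.lt_def]
    omega
  have hdisj : Disjoint (Finset.Ico k k') (Finset.Ici k') := by
    simp only [Finset.disjoint_left, Finset.mem_Ico, Finset.mem_Ici, Fin.le_def, Fin.lt_def]
    omega
  have hA : ∑ i ∈ Finset.Ico k k', α i + ∑ i ∈ Finset.Ici k', α i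
      = ∑ i ∈ Finset.Ici k, α i := by rw [← Finset.sum_union hdisj, hsplit]
  have hN : ∑ i ∈ Finset.Ico k k', N i + ∑ i ∈ Finset.Ici k', N i
      = ∑ i ∈ Finset.Ici k, N i := by rw [← Finset.sum_union hdisj, hsplit]
  have hkn : k.val < k'.val := hlt
  have hk'n : k'.val ≤ n := by omega
  have hgt : ∑ i ∈ Finset.Ico k k', N i < ∑ i ∈ Finset.Ico k k', α i := by omega
  by_contra h
  push_neg at h
  have hle : ∑ i ∈ Finset.Ico k k', α i ≤ ∑ i ∈ Finset.Ico k k', N i := by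
    apply Finset.sum_le_sum
    intro i hi
    rw [Finset.mem_Ico] at hi
    by_contra hcon
    exact absurd (h i (mem_Lset.mpr (by omega)) hi.1) (not_le.mpr hi.2)
  omega

/-- if `|L(N,α)| = |K(N,α)|` then `α ∈ 𝒥(K(N,α),N)`, and in particular
`α ∈ {0,…,|N|+n}^n` (here `|N| + n_paper = ∑ N + (n+1)`). -/
theorem stmt6 (n : ℕ) (N α : Fin (n + 1) → ℕ)
    (hcard : (Lset n N α).card = (Kset n N α).card) :
    α ∈ Jset n (Kset n N α) N ∧ ∀ j, α j ≤ (∑ j, N j) + (n + 1) := by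
  refine ⟨⟨rfl, hcard⟩, ?_⟩
  intro j
  have hNj : N j ≤ ∑ j, N j :=
    Finset.single_le_sum (fun i _ => Nat.zero_le _) (Finset.mem_univ j)
  rcases Finset.eq_empty_or_nonempty (Kset n N α) with hK | hK
  · have hL : Lset n N α = ∅ := Finset.card_eq_zero.mp (by rw [hcard, hK]; simp)
    have hj : j ∉ Lset n N α := by simp [hL]
    rw [mem_Lset] at hj
    omega
  · set k₁ := (Kset n N α).min' hK with hk₁def
    have hk₁K : k₁ ∈ Kset n N α := (Kset n N α).min'_mem hK
    have key : ∀ l ∈ Lset n N α, k₁ ≤ l := by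
      set f : Fin (n + 1) → Fin (n + 1) := fun k =>
        if h : ((Lset n N α) ∩ Finset.Ici k).Nonempty
        then ((Lset n N α) ∩ Finset.Ici k).min' h else k with hfdef
      have hfk : ∀ k ∈ Kset n N α, f k ∈ Lset n N α ∧ k ≤ f k ∧
          ∀ i ∈ Lset n N α, k ≤ i → f k ≤ i := by
        intro k hk
        have hne := Lset_Ici_nonempty hk
        have hfeq : f k = ((Lset n N α) ∩ Finset.Ici k).min' hne := by
          simp [hfdef, hne]
        have hmem := ((Lset n N α) ∩ Finset.Ici k).min'_mem hne
        rw [← hfeq] at hmem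
        rw [Finset.mem_inter, Finset.mem_Ici] at hmem
        refine ⟨hmem.1, hmem.2, fun i hi hki => ?_⟩
        rw [hfeq]
        exact Finset.min'_le _ _ (by rw [Finset.mem_inter, Finset.mem_Ici]; exact ⟨hi, hki⟩)
      have main : ∀ a ∈ Kset n N α, ∀ b ∈ Kset n N α, a < b → f a ≠ f b := by
        intro a ha b hb hlt hab
        obtain ⟨i, hiL, hai, hib⟩ := exists_L_between ha hb hlt
        have h1 : f a ≤ i := (hfk a ha).2.2 i hiL hai
        have h2 : b ≤ f b := (hfk b hb).2.1
        rw [hab] at h1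
        exact absurd (h1.trans_lt hib) (not_lt.mpr h2)
      have hinj : Set.InjOn f (Kset n N α) := by
        intro a ha b hb hab
        rcases lt_trichotomy a b with hlt | heq | hlt
        · exact absurd hab (main a ha b hb hlt)
        · exact heq
        · exact absurd hab.symm (main b hb a ha hlt)
      have hmap : ∀ k ∈ Kset n N α, f k ∈ (Lset n N α) ∩ Finset.Ici k₁ := by
        intro k hk
        rw [Finset.mem_inter, Finset.mem_Ici]
        exact ⟨(hfk k hk).1, ((Kset n N α).min'_le k hk).trans (hfk k hk).2.1⟩
      have hcardle : (Kset n N α).card ≤ ((Lset n N α) ∩ Finset.Ici k₁).card :=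
        Finset.card_le_card_of_injOn f hmap hinj
      have heq : (Lset n N α) ∩ Finset.Ici k₁ = Lset n N α :=
        Finset.eq_of_subset_of_card_le Finset.inter_subset_left (by omega)
      intro l hl
      rw [← heq, Finset.mem_inter, Finset.mem_Ici] at hl
      exact hl.2
    rcases le_or_gt k₁ j with hle | hlt
    · rw [mem_Kset] at hk₁K
      have h1 : α j ≤ ∑ i ∈ Finset.Ici k₁, α i :=
        Finset.single_le_sum (fun i _ => Nat.zero_le _) (Finset.mem_Ici.mpr hle)
      have h2 : ∑ i ∈ Finset.Ici k₁, N i ≤ ∑ i, N i :=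
        Finset.sum_le_sum_of_subset (Finset.subset_univ _)
      omega
    · have hj : j ∉ Lset n N α := fun hj => absurd (key j hj) (not_le.mpr hlt)
      rw [mem_Lset] at hj
      omega
end

section
/- Let N ∈ ℕ₀, α ∈ ℕ₀, and t, θ ∈ ℂ with |tθ| ≤ 1. If α ≤ N then |binom(N − tθ, α)| ≤ (N+1)!; and if α ≥ N + 1 then |binom(N − tθ, α)| ≤ (N+1)|tθ|. -/
open Finset

lemma prod_add_two (m : ℕ) : (∏ j ∈ range m, (j + 2)) = (m + 1).factorial := by
  induction m with
  | zero => simp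
  | succ m ih =>
    rw [prod_range_succ, ih, Nat.factorial_succ (m + 1)]
    ring

/-- for `|tθ| ≤ 1`: if `α ≤ N` then `|binom(N − tθ, α)| ≤ (N+1)!`, and if
`α ≥ N + 1` then `|binom(N − tθ, α)| ≤ (N+1)|tθ|`. -/
theorem stmt7 (N α : ℕ) (t θ : ℂ) (h : ‖t * θ‖ ≤ 1) :
    (α ≤ N → ‖cbinom ((N : ℂ) - t * θ) α‖ ≤ ((N + 1).factorial : ℝ)) ∧
    (N + 1 ≤ α →
      ‖cbinom ((N : ℂ) - t * θ) α‖ ≤ ((N : ℝ) + 1) * ‖t * θ‖) := by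
  set x := t * θ with hx
  have habs : ∀ k : ℕ, ‖(N : ℂ) - x - k‖ ≤ |(N : ℝ) - k| + 1 := by
    intro k
    have e : (N : ℂ) - x - k = ((N : ℂ) - k) - x := by ring
    have e2 : ‖(N : ℂ) - k‖ = |(N : ℝ) - k| := by
      rw [show (N : ℂ) - (k : ℂ) = (((N : ℝ) - k : ℝ) : ℂ) by push_cast; ring,
        Complex.norm_real, Real.norm_eq_abs]
    calc ‖(N : ℂ) - x - k‖ ≤ ‖(N : ℂ) - k‖ + ‖x‖ := by
          rw [e]; exact norm_sub_le _ _
      _ ≤ |(N : ℝ) - k| + 1 := by rw [e2]; linarith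
  have hcb : ‖cbinom ((N : ℂ) - x) α‖
      = (∏ k ∈ range α, ‖(N : ℂ) - x - k‖) / (α.factorial : ℝ) := by
    rw [cbinom, norm_div, norm_prod, Complex.norm_natCast]
  have hfacpos : (0 : ℝ) < (α.factorial : ℝ) := by exact_mod_cast α.factorial_pos
  have hfpos : ∀ S : Finset ℕ, (0:ℝ) ≤ ∏ k ∈ S, ‖(N : ℂ) - x - k‖ :=
    fun S => Finset.prod_nonneg fun k _ => norm_nonneg _
  constructor
  · -- case α ≤ N
    intro hα
    rw [hcb]
    have h1 : (∏ k ∈ range α, ‖(N : ℂ) - x - k‖)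
        ≤ ∏ k ∈ range α, ((N + 1 - k : ℕ) : ℝ) := by
      apply Finset.prod_le_prod (fun k _ => norm_nonneg _)
      intro k hk
      have hkN : k ≤ N := le_trans (Nat.le_of_lt_succ (Nat.lt_succ_of_lt (mem_range.mp hk))) hα
      refine le_trans (habs k) ?_
      have : |(N : ℝ) - k| = (N : ℝ) - k := by
        rw [abs_of_nonneg]; have : (k:ℝ) ≤ N := by exact_mod_cast hkN
        linarith
      rw [this]
      have : ((N + 1 - k : ℕ) : ℝ) = (N : ℝ) + 1 - k := by
        have : k ≤ N + 1 := hkN.trans (Nat.le_succ N)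
        push_cast [Nat.cast_sub this]; ring
      rw [this]; linarith
    have h2 : (∏ k ∈ range α, ((N + 1 - k : ℕ) : ℝ)) ≤ ((N + 1).factorial : ℝ) := by
      rw [← Nat.cast_prod, ← Nat.descFactorial_eq_prod_range]
      have hd : (N + 1).descFactorial α ≤ (N + 1).factorial := by
        have h3 := Nat.factorial_mul_descFactorial (hα.trans (Nat.le_succ N))
        calc (N + 1).descFactorial α ≤ (N + 1 - α).factorial * (N + 1).descFactorial α :=
              Nat.le_mul_of_pos_left _ (Nat.factorial_pos _)
          _ = (N + 1).factorial := h3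
      exact_mod_cast hd
    have h4 : (1:ℝ) ≤ (α.factorial : ℝ) := by exact_mod_cast α.factorial_pos
    calc _ ≤ (∏ k ∈ range α, ‖(N : ℂ) - x - k‖) :=
          div_le_self (hfpos _) h4
      _ ≤ _ := h1.trans h2
  · -- case N + 1 ≤ α
    intro hα
    rw [hcb]
    set f : ℕ → ℝ := fun k => ‖(N : ℂ) - x - k‖ with hf
    have hsplit : (∏ k ∈ range α, f k)
        = (∏ k ∈ range N, f k) * f N * (∏ k ∈ Ico (N + 1) α, f k) := by
      rw [range_eq_Ico, ← Finset.prod_Ico_consecutive _ (Nat.zero_le (N+1)) hα,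
        ← range_eq_Ico, prod_range_succ]
    have hA : (∏ k ∈ range N, f k) ≤ ((N + 1).factorial : ℝ) := by
      have h1 : (∏ k ∈ range N, f k) ≤ ∏ k ∈ range N, ((N + 1 - k : ℕ) : ℝ) := by
        apply Finset.prod_le_prod (fun k _ => norm_nonneg _)
        intro k hk
        have hkN : k ≤ N := (mem_range.mp hk).le
        refine le_trans (habs k) ?_
        have e1 : |(N : ℝ) - k| = (N : ℝ) - k := by
          have : (k:ℝ) ≤ N := by exact_mod_cast hkN
          rw [abs_of_nonneg]; linarith
        have e2 : ((N + 1 - k : ℕ) : ℝ) = (N : ℝ) + 1 - k := by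
          push_cast [Nat.cast_sub (hkN.trans (Nat.le_succ N))]; ring
        rw [e1, e2]; linarith
      refine h1.trans ?_
      rw [← Nat.cast_prod, ← Nat.descFactorial_eq_prod_range]
      have h3 := Nat.factorial_mul_descFactorial (Nat.le_succ N)
      simp only [Nat.succ_eq_add_one, Nat.add_sub_cancel_left, Nat.succ_sub_one] at h3
      have : (N + 1).descFactorial N = (N + 1).factorial := by
        have := Nat.factorial_mul_descFactorial (Nat.le_succ N)
        simpa using this
      exact_mod_cast this.le
    have hB : f N = ‖x‖ := by
      simp only [hf]
      rw [show (N : ℂ) - x - N = -x by ring, norm_neg]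
    have hC : (∏ k ∈ Ico (N + 1) α, f k) ≤ ((α - N).factorial : ℝ) := by
      have h1 : (∏ k ∈ Ico (N + 1) α, f k) ≤ ∏ k ∈ Ico (N + 1) α, ((k + 1 - N : ℕ) : ℝ) := by
        apply Finset.prod_le_prod (fun k _ => norm_nonneg _)
        intro k hk
        have hkN : N + 1 ≤ k := (mem_Ico.mp hk).1
        refine le_trans (habs k) ?_
        have e1 : |(N : ℝ) - k| = (k : ℝ) - N := by
          have : (N:ℝ) ≤ k := by exact_mod_cast hkN.trans' (Nat.le_succ N)
          rw [abs_sub_comm, abs_of_nonneg]; linarith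
        have e2 : ((k + 1 - N : ℕ) : ℝ) = (k : ℝ) + 1 - N := by
          have hNk : N ≤ k + 1 := le_trans (hkN.trans' (Nat.le_succ N)) (Nat.le_succ k)
          push_cast [Nat.cast_sub hNk]; ring
        rw [e1, e2]; linarith
      refine h1.trans ?_
      rw [← Nat.cast_prod]
      have : (∏ k ∈ Ico (N + 1) α, (k + 1 - N)) = (α - N).factorial := by
        rw [Finset.prod_Ico_eq_prod_range]
        have e : ∀ j ∈ range (α - (N + 1)), (N + 1 + j + 1 - N) = j + 2 := by
          intro j _; omega
        rw [Finset.prod_congr rfl e, prod_add_two]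
        congr 1
        omega
      rw [this]
    have hfacineq : ((N + 1).factorial : ℝ) * ((α - N).factorial : ℝ) ≤ ((N:ℝ) + 1) * (α.factorial : ℝ) := by
      have hN : N ≤ α := (Nat.le_succ N).trans hα
      have hdvd : N.factorial * (α - N).factorial ∣ α.factorial :=
        Nat.factorial_mul_factorial_dvd_factorial hN
      have hle : N.factorial * (α - N).factorial ≤ α.factorial :=
        Nat.le_of_dvd α.factorial_pos hdvd
      have : (N + 1).factorial * (α - N).factorial ≤ (N + 1) * α.factorial := by
        rw [Nat.factorial_succ, mul_assoc]
        exact Nat.mul_le_mul_left _ hle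
      calc ((N + 1).factorial : ℝ) * ((α - N).factorial : ℝ)
          = (((N + 1).factorial * (α - N).factorial : ℕ) : ℝ) := by push_cast; ring
        _ ≤ (((N + 1) * α.factorial : ℕ) : ℝ) := by exact_mod_cast this
        _ = ((N:ℝ) + 1) * (α.factorial : ℝ) := by push_cast; ring
    rw [hsplit, div_le_iff₀ hfacpos]
    have hxnn : (0:ℝ) ≤ ‖x‖ := norm_nonneg _
    calc (∏ k ∈ range N, f k) * f N * (∏ k ∈ Ico (N + 1) α, f k)
        ≤ ((N + 1).factorial : ℝ) * ‖x‖ * ((α - N).factorial : ℝ) := by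
          apply mul_le_mul ?_ hC (hfpos _) (by positivity)
          rw [hB]
          exact mul_le_mul_of_nonneg_right hA hxnn
      _ = ((N + 1).factorial : ℝ) * ((α - N).factorial : ℝ) * ‖x‖ := by ring
      _ ≤ ((N:ℝ) + 1) * (α.factorial : ℝ) * ‖x‖ :=
          mul_le_mul_of_nonneg_right hfacineq hxnn
      _ = ((N:ℝ) + 1) * ‖x‖ * (α.factorial : ℝ) := by ring
end

section
/- Let N ∈ ℕ₀, α ∈ ℕ₀ with α ≥ N + 1, and θ ∈ ℂ. Then lim_{t→0, t≠0} (1/t) · binom(N − tθ, α) = (−1)^{α−N} θ / ( α · binom(α−1, N) ). -/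
open Topology

/-- for `α ≥ N + 1`,
`lim_{t→0, t≠0} (1/t) binom(N − tθ, α) = (−1)^{α−N} θ / (α · binom(α−1, N))`. -/
theorem stmt8 (N α : ℕ) (hα : N + 1 ≤ α) (θ : ℂ) :
    Filter.Tendsto (fun t : ℂ => t⁻¹ * cbinom ((N : ℂ) - t * θ) α) (𝓝[≠] (0 : ℂ))
      (𝓝 ((-1 : ℂ) ^ (α - N) * θ / ((α : ℂ) * ((α - 1).choose N : ℂ)))) := by
  have hNα : N ∈ Finset.range α := Finset.mem_range.2 (by omega)
  set g : ℂ → ℂ := fun t =>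
    -θ * (∏ k ∈ (Finset.range α).erase N, ((N : ℂ) - t * θ - (k : ℂ))) /
      (α.factorial : ℂ) with hg
  have hfac : (α.factorial : ℂ) ≠ 0 := by exact_mod_cast α.factorial_ne_zero
  have heq : ∀ᶠ t in 𝓝[≠] (0 : ℂ),
      t⁻¹ * cbinom ((N : ℂ) - t * θ) α = g t := by
    filter_upwards [self_mem_nhdsWithin] with t ht
    have ht0 : t ≠ 0 := ht
    rw [cbinom, ← Finset.mul_prod_erase _ _ hNα]
    have : (N : ℂ) - t * θ - (N : ℂ) = -(t * θ) := by ring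
    rw [this, hg]
    field_simp
  have hcont : Continuous g := by
    apply Continuous.div_const
    exact (continuous_const.mul (continuous_finset_prod _ fun k _ => by continuity))
  have hg0 : g 0 = (-1 : ℂ) ^ (α - N) * θ / ((α : ℂ) * ((α - 1).choose N : ℂ)) := by
    have hsplit : (Finset.range α).erase N = Finset.range N ∪ Finset.Ico (N + 1) α := by
      ext k
      simp only [Finset.mem_erase, Finset.mem_range, Finset.mem_union, Finset.mem_Ico]
      omega
    have hdisj : Disjoint (Finset.range N) (Finset.Ico (N + 1) α) := by
      rw [Finset.disjoint_left]
      intro k hk hk'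
      simp only [Finset.mem_range] at hk
      simp only [Finset.mem_Ico] at hk'
      omega
    have h1 : (∏ k ∈ Finset.range N, ((N : ℂ) - 0 * θ - (k : ℂ))) = (N.factorial : ℂ) := by
      rw [← Finset.prod_range_reflect]
      have e1 : ∏ j ∈ Finset.range N, ((N : ℂ) - 0 * θ - ((N - 1 - j : ℕ) : ℂ)) =
          ∏ j ∈ Finset.range N, ((j : ℂ) + 1) := by
        refine Finset.prod_congr rfl fun j hj => ?_
        rw [Nat.sub_sub, Nat.cast_sub (by simp at hj; omega)]
        push_cast
        ring
      rw [e1, show (∏ j ∈ Finset.range N, ((j : ℂ) + 1)) =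
          ((∏ j ∈ Finset.range N, (j + 1) : ℕ) : ℂ) by push_cast; rfl,
        Finset.prod_range_add_one_eq_factorial]
    set d := α - 1 - N with hd
    have h2 : (∏ k ∈ Finset.Ico (N + 1) α, ((N : ℂ) - 0 * θ - (k : ℂ))) =
        (-1 : ℂ) ^ d * (d.factorial : ℂ) := by
      rw [Finset.prod_Ico_eq_prod_range]
      have e2 : ∏ j ∈ Finset.range (α - (N + 1)), ((N : ℂ) - 0 * θ - ((N + 1 + j : ℕ) : ℂ)) =
          ∏ j ∈ Finset.range (α - (N + 1)), -((j : ℂ) + 1) := by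
        refine Finset.prod_congr rfl fun j hj => ?_
        push_cast
        ring
      have e3 : ∏ j ∈ Finset.range (α - (N + 1)), -((j : ℂ) + 1) =
          (-1 : ℂ) ^ (α - (N + 1)) * ∏ j ∈ Finset.range (α - (N + 1)), ((j : ℂ) + 1) := by
        rw [show ((-1 : ℂ) ^ (α - (N + 1))) =
            ∏ _j ∈ Finset.range (α - (N + 1)), (-1 : ℂ) by simp, ← Finset.prod_mul_distrib]
        exact Finset.prod_congr rfl fun _ _ => by ring
      rw [e2, e3]
      rw [show (∏ j ∈ Finset.range (α - (N + 1)), ((j : ℂ) + 1)) =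
          ((∏ j ∈ Finset.range (α - (N + 1)), (j + 1) : ℕ) : ℂ) by push_cast; rfl,
        Finset.prod_range_add_one_eq_factorial]
      rw [show α - (N + 1) = d by omega]
    have hkey : α.factorial = α * ((α - 1).choose N * (N.factorial * d.factorial)) := by
      have h3 : (α - 1).choose N * N.factorial * d.factorial = (α - 1).factorial := by
        exact Nat.choose_mul_factorial_mul_factorial (show N ≤ α - 1 by omega)
      have h4 : α * (α - 1).factorial = α.factorial := by
        conv_rhs => rw [show α = (α - 1) + 1 by omega]
        rw [Nat.factorial_succ, show (α - 1) + 1 = α by omega]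
      rw [← h4, ← h3]; ring
    have hαN : α - N = d + 1 := by omega
    have hα0 : (α : ℂ) ≠ 0 := by exact_mod_cast (by omega : α ≠ 0)
    have hc0 : (((α - 1).choose N : ℕ) : ℂ) ≠ 0 := by
      exact Nat.cast_ne_zero.2 (Nat.choose_pos (show N ≤ α - 1 by omega)).ne'
    rw [hg]
    simp only [hsplit, Finset.prod_union hdisj, h1, h2, hαN]
    rw [div_eq_div_iff hfac (by
      exact mul_ne_zero hα0 hc0)]
    rw [show (α.factorial : ℂ) = ((α * ((α - 1).choose N * (N.factorial * d.factorial)) : ℕ) : ℂ)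
      by exact congrArg (Nat.cast : ℕ → ℂ) hkey]
    push_cast
    ring
  have : Filter.Tendsto g (𝓝[≠] (0 : ℂ)) (𝓝 (g 0)) :=
    (hcont.tendsto 0).mono_left nhdsWithin_le_nhds
  rw [hg0] at this
  exact this.congr' (Filter.EventuallyEq.symm heq)
end

section
/- Let q ∈ ℕ (so n = 1), (u, γ) = ((u_1,…,u_q), γ) with Re(γ) > 0 and Re(u_k + γ) > 0 for all k, K ∈ ℕ₀, and s = (s_1,…,s_q) ∈ ℂ^q with Re(s_1+⋯+s_q) > 1. Then Z_{1,q}(s;u;γ) = Σ_{α ∈ ℕ₀^q, |α| ≤ K} binom(−s,α) u^α γ^{−|s|−|α|} ζ(|s|+|α|) + (K+1) Σ_{α ∈ ℕ₀^q, |α| = K+1} binom(−s,α) u^α R_K(s;u;γ;α), where R_K(s;u;γ;α) = Σ_{m ≥ 1} ∫_0^1 (1−y)^K ∏_{k=1}^q (γ m + u_k y)^{−s_k−α_k} dy, and ζ is the Riemann zeta-function. -/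
open Complex Finset Set intervalIntegral

lemma cbinom_zero (z : ℂ) : cbinom z 0 = 1 := by simp [cbinom]

lemma cbinom_mul_sub (z : ℂ) (n : ℕ) :
    cbinom z n * (z - n) = ((n : ℂ) + 1) * cbinom z (n + 1) := by
  have h1 : ((n.factorial : ℂ)) ≠ 0 := Nat.cast_ne_zero.2 n.factorial_ne_zero
  have h2 : (((n+1).factorial : ℂ)) ≠ 0 := Nat.cast_ne_zero.2 (n+1).factorial_ne_zero
  rw [cbinom, cbinom, Finset.prod_range_succ]
  rw [Nat.factorial_succ] at h2 ⊢
  push_cast at h2 ⊢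
  field_simp

section sets

variable {q : ℕ}

lemma mem_Bset {j : ℕ} {α : Fin q → ℕ} :
    α ∈ (Fintype.piFinset fun _ : Fin q => Finset.range (j + 1)).filter
      (fun α => ∑ k, α k = j) ↔ ∑ k, α k = j := by
  simp only [Finset.mem_filter, Fintype.mem_piFinset, Finset.mem_range]
  constructor
  · exact fun h => h.2
  · intro h
    refine ⟨fun k => ?_, h⟩
    have : α k ≤ ∑ k, α k := Finset.single_le_sum (fun i _ => Nat.zero_le _) (Finset.mem_univ k)
    omega

lemma mem_Aset {K : ℕ} {α : Fin q → ℕ} :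
    α ∈ (Fintype.piFinset fun _ : Fin q => Finset.range (K + 1)).filter
      (fun α => ∑ k, α k ≤ K) ↔ ∑ k, α k ≤ K := by
  simp only [Finset.mem_filter, Fintype.mem_piFinset, Finset.mem_range]
  constructor
  · exact fun h => h.2
  · intro h
    refine ⟨fun k => ?_, h⟩
    have : α k ≤ ∑ k, α k := Finset.single_le_sum (fun i _ => Nat.zero_le _) (Finset.mem_univ k)
    omega

lemma prod_comp_update {M : Type*} [CommMonoid M] {X : Type*} (h : Fin q → X → M)
    (α : Fin q → X) (t : Fin q) (v : X) :
    ∏ k, h k (Function.update α t v k) = h t v * ∏ k ∈ Finset.univ.erase t, h k (α k) := by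
  have : (fun k => h k (Function.update α t v k))
      = Function.update (fun k => h k (α k)) t (h t v) := by
    funext k
    rcases eq_or_ne k t with rfl | hk
    · simp
    · simp [Function.update_of_ne hk]
  rw [this, Finset.prod_update_of_mem (Finset.mem_univ t), Finset.sdiff_singleton_eq_erase]

lemma prod_comp_self {M : Type*} [CommMonoid M] {X : Type*} (h : Fin q → X → M)
    (α : Fin q → X) (t : Fin q) :
    ∏ k, h k (α k) = h t (α t) * ∏ k ∈ Finset.univ.erase t, h k (α k) :=
  (Finset.mul_prod_erase _ _ (Finset.mem_univ t)).symm

lemma sum_bump (α : Fin q → ℕ) (t : Fin q) :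
    ∑ k, Function.update α t (α t + 1) k = (∑ k, α k) + 1 := by
  rw [Finset.sum_update_of_mem (Finset.mem_univ t), Finset.sdiff_singleton_eq_erase,
    ← Finset.add_sum_erase _ _ (Finset.mem_univ t)]
  ring

end sets

section reindex

variable {q : ℕ} (s u : Fin q → ℂ)

lemma reindex (j : ℕ) (G : (Fin q → ℕ) → ℂ) :
    ∑ α ∈ (Fintype.piFinset fun _ : Fin q => Finset.range (j + 1)).filter
        (fun α => ∑ k, α k = j),
      (∏ k, cbinom (-(s k)) (α k)) * (∏ k, u k ^ α k) *
        (∑ t, (-(s t) - (α t : ℂ)) * u t * G (Function.update α t (α t + 1)))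
    = ((j : ℂ) + 1) *
      ∑ β ∈ (Fintype.piFinset fun _ : Fin q => Finset.range (j + 2)).filter
          (fun β => ∑ k, β k = j + 1),
        (∏ k, cbinom (-(s k)) (β k)) * (∏ k, u k ^ β k) * G β := by
  classical
  set F : (Fin q → ℕ) × Fin q → ℂ := fun p =>
    ((p.1 p.2 : ℂ)) * ((∏ k, cbinom (-(s k)) (p.1 k)) * (∏ k, u k ^ p.1 k) * G p.1) with hF
  have step1 : ∀ α : Fin q → ℕ,
      (∏ k, cbinom (-(s k)) (α k)) * (∏ k, u k ^ α k) *
        (∑ t, (-(s t) - (α t : ℂ)) * u t * G (Function.update α t (α t + 1)))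
      = ∑ t, F (Function.update α t (α t + 1), t) := by
    intro α
    rw [Finset.mul_sum]
    refine Finset.sum_congr rfl fun t _ => ?_
    have hb : (∏ k, cbinom (-(s k)) (Function.update α t (α t + 1) k))
        = cbinom (-(s t)) (α t + 1) * ∏ k ∈ Finset.univ.erase t, cbinom (-(s k)) (α k) :=
      prod_comp_update (fun k n => cbinom (-(s k)) n) α t (α t + 1)
    have hu' : (∏ k, u k ^ (Function.update α t (α t + 1) k))
        = u t ^ (α t + 1) * ∏ k ∈ Finset.univ.erase t, u k ^ α k :=
      prod_comp_update (fun k n => u k ^ n) α t (α t + 1)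
    have hb0 : (∏ k, cbinom (-(s k)) (α k))
        = cbinom (-(s t)) (α t) * ∏ k ∈ Finset.univ.erase t, cbinom (-(s k)) (α k) :=
      prod_comp_self (fun k n => cbinom (-(s k)) n) α t
    have hu0 : (∏ k, u k ^ (α k))
        = u t ^ (α t) * ∏ k ∈ Finset.univ.erase t, u k ^ α k :=
      prod_comp_self (fun k n => u k ^ n) α t
    have key := cbinom_mul_sub (-(s t)) (α t)
    simp only [hF, Function.update_self]
    rw [hb, hu', hb0, hu0, pow_succ]
    push_cast
    linear_combination ((∏ k ∈ Finset.univ.erase t, cbinom (-(s k)) (α k)) *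
      ((u t ^ α t) * (∏ k ∈ Finset.univ.erase t, u k ^ α k)) * u t *
        G (Function.update α t (α t + 1))) * key
  have step2 : ((j : ℂ) + 1) *
      ∑ β ∈ (Fintype.piFinset fun _ : Fin q => Finset.range (j + 2)).filter
          (fun β => ∑ k, β k = j + 1),
        (∏ k, cbinom (-(s k)) (β k)) * (∏ k, u k ^ β k) * G β
      = ∑ β ∈ (Fintype.piFinset fun _ : Fin q => Finset.range (j + 2)).filter
          (fun β => ∑ k, β k = j + 1), ∑ t, F (β, t) := by
    rw [Finset.mul_sum]
    refine Finset.sum_congr rfl fun β hβ => ?_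
    have hsum : ∑ k, β k = j + 1 := mem_Bset.1 hβ
    have : ∑ t, F (β, t) = (∑ t, (β t : ℂ)) *
        ((∏ k, cbinom (-(s k)) (β k)) * (∏ k, u k ^ β k) * G β) := by
      rw [Finset.sum_mul]
    rw [this, ← Nat.cast_sum, hsum]
    push_cast
    ring
  rw [step2]
  rw [Finset.sum_congr rfl (fun α _ => step1 α)]
  -- now a bijection between double sums
  rw [← Finset.sum_product', ← Finset.sum_product']
  rw [show ∑ p ∈ ((Fintype.piFinset fun _ : Fin q => Finset.range (j + 2)).filter
          (fun β => ∑ k, β k = j + 1)) ×ˢ Finset.univ, F (p.1, p.2)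
      = ∑ p ∈ (((Fintype.piFinset fun _ : Fin q => Finset.range (j + 2)).filter
          (fun β => ∑ k, β k = j + 1)) ×ˢ Finset.univ).filter (fun p => p.1 p.2 ≠ 0),
          F (p.1, p.2) from
    (Finset.sum_filter_of_ne (fun p _ hne => by
      intro h0
      apply hne
      simp only [hF, h0, Nat.cast_zero, zero_mul])).symm]
  refine Finset.sum_bij' (fun p _ => (Function.update p.1 p.2 (p.1 p.2 + 1), p.2))
    (fun p _ => (Function.update p.1 p.2 (p.1 p.2 - 1), p.2)) ?_ ?_ ?_ ?_ ?_
  · intro p hp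
    rw [Finset.mem_product] at hp
    have h1 : ∑ k, p.1 k = j := mem_Bset.1 hp.1
    refine Finset.mem_filter.2 ⟨Finset.mem_product.2 ⟨mem_Bset.2 ?_, Finset.mem_univ _⟩, ?_⟩
    · rw [sum_bump, h1]
    · simp
  · intro p hp
    rw [Finset.mem_filter, Finset.mem_product] at hp
    obtain ⟨⟨hp1, -⟩, hp2⟩ := hp
    have h1 : ∑ k, p.1 k = j + 1 := mem_Bset.1 hp1
    have hge : 1 ≤ p.1 p.2 := Nat.one_le_iff_ne_zero.2 hp2
    refine Finset.mem_product.2 ⟨mem_Bset.2 ?_, Finset.mem_univ _⟩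
    have e1 : ∑ k, Function.update p.1 p.2 (p.1 p.2 - 1) k
        = (p.1 p.2 - 1) + ∑ k ∈ Finset.univ.erase p.2, p.1 k := by
      rw [Finset.sum_update_of_mem (Finset.mem_univ p.2), Finset.sdiff_singleton_eq_erase]
    have e2 : p.1 p.2 + ∑ k ∈ Finset.univ.erase p.2, p.1 k = j + 1 := by
      rw [Finset.add_sum_erase _ _ (Finset.mem_univ p.2)]; exact h1
    rw [e1]
    omega
  · intro p hp
    obtain ⟨a, t⟩ := p
    simp only [Prod.mk.injEq]
    refine ⟨funext fun k => ?_, trivial⟩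
    simp only [Function.update_idem, Function.update_self]
    rcases eq_or_ne k t with rfl | hk
    · simp
    · simp [Function.update_of_ne hk]
  · intro p hp
    rw [Finset.mem_filter, Finset.mem_product] at hp
    have hge : 1 ≤ p.1 p.2 := Nat.one_le_iff_ne_zero.2 hp.2
    obtain ⟨a, t⟩ := p
    simp only [Prod.mk.injEq]
    refine ⟨funext fun k => ?_, trivial⟩
    simp only [Function.update_idem, Function.update_self]
    rcases eq_or_ne k t with rfl | hk
    · simp only [Function.update_self]
      exact Nat.sub_add_cancel hge
    · simp [Function.update_of_ne hk]
  · intro p hp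
    rfl

end reindex

section partA

variable {q : ℕ} {c : ℂ} {u : Fin q → ℂ}

lemma seg_pos (hc : 0 < c.re) (hcu : ∀ k, 0 < (c + u k).re) (k : Fin q) {y : ℝ}
    (hy : y ∈ Icc (0:ℝ) 1) : 0 < (c + u k * (y:ℂ)).re := by
  have h1 := hcu k
  have h2 : (c + u k * (y:ℂ)).re = (1 - y) * c.re + y * (c + u k).re := by
    simp [Complex.add_re, Complex.mul_re]
    ring
  rw [h2]
  rcases eq_or_lt_of_le hy.1 with h0 | h0
  · rw [← h0]; simpa using hc
  · nlinarith [mul_nonneg (sub_nonneg.2 hy.2) hc.le]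

lemma hasDerivAt_factor (k : Fin q) (w : ℂ) {y : ℝ} (hy : 0 < (c + u k * (y:ℂ)).re) :
    HasDerivAt (fun x : ℝ => (c + u k * (x:ℂ)) ^ w)
      (w * (c + u k * (y:ℂ)) ^ (w - 1) * u k) y := by
  have hb : HasDerivAt (fun z : ℂ => c + u k * z) (u k) (y:ℂ) := by
    simpa using ((hasDerivAt_id ((y:ℝ):ℂ)).const_mul (u k)).const_add c
  exact (hb.cpow_const (Or.inl hy)).comp_ofReal

lemma hasDerivAt_g (hc : 0 < c.re) (hcu : ∀ k, 0 < (c + u k).re) (w : Fin q → ℂ) {y : ℝ}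
    (hy : y ∈ Icc (0:ℝ) 1) :
    HasDerivAt (fun x : ℝ => ∏ k, (c + u k * (x:ℂ)) ^ (w k))
      (∑ t, (w t * u t) *
        ∏ k, (c + u k * (y:ℂ)) ^ (Function.update w t (w t - 1) k)) y := by
  have h := HasDerivAt.fun_finsetProd (u := Finset.univ)
    (f := fun k (x : ℝ) => (c + u k * (x:ℂ)) ^ (w k))
    (f' := fun k => w k * (c + u k * (y:ℂ)) ^ (w k - 1) * u k)
    (fun k _ => hasDerivAt_factor k (w k) (seg_pos hc hcu k hy))
  refine h.congr_deriv (Eq.symm ?_)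
  refine Finset.sum_congr rfl fun t _ => ?_
  rw [prod_comp_update (fun k e => (c + u k * (y:ℂ)) ^ e) w t (w t - 1)]
  rw [smul_eq_mul]
  ring

lemma contOn_g (hc : 0 < c.re) (hcu : ∀ k, 0 < (c + u k).re) (w : Fin q → ℂ) :
    ContinuousOn (fun y : ℝ => ∏ k, (c + u k * (y:ℂ)) ^ (w k)) (Icc (0:ℝ) 1) := by
  intro y hy
  apply ContinuousAt.continuousWithinAt
  have : ∀ k : Fin q, ContinuousAt (fun x : ℝ => (c + u k * (x:ℂ)) ^ (w k)) y := by
    intro k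
    exact ((continuous_const.add (continuous_const.mul Complex.continuous_ofReal)).continuousAt).cpow
      continuousAt_const (Or.inl (seg_pos hc hcu k hy))
  exact tendsto_finset_prod _ fun k _ => this k

lemma intInt_poly_g (hc : 0 < c.re) (hcu : ∀ k, 0 < (c + u k).re) (N : ℕ) (w : Fin q → ℂ) :
    IntervalIntegrable (fun y : ℝ => (((1 - y) ^ N : ℝ) : ℂ) *
      ∏ k, (c + u k * (y:ℂ)) ^ (w k)) MeasureTheory.volume 0 1 := by
  apply ContinuousOn.intervalIntegrable
  rw [Set.uIcc_of_le zero_le_one]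
  exact ((Complex.continuous_ofReal.comp
    ((continuous_const.sub continuous_id).pow N)).continuousOn).mul (contOn_g hc hcu w)

lemma intInt_gsum (hc : 0 < c.re) (hcu : ∀ k, 0 < (c + u k).re) (w : Fin q → ℂ) :
    IntervalIntegrable (fun y : ℝ => ∑ t, (w t * u t) *
      ∏ k, (c + u k * (y:ℂ)) ^ (Function.update w t (w t - 1) k))
      MeasureTheory.volume 0 1 := by
  apply ContinuousOn.intervalIntegrable
  rw [Set.uIcc_of_le zero_le_one]
  refine continuousOn_finset_sum _ fun t _ => ContinuousOn.mul continuousOn_const ?_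
  exact contOn_g hc hcu (Function.update w t (w t - 1))

end partA

section ibp

variable {q : ℕ} {c : ℂ} {u : Fin q → ℂ}

lemma ibp_step (hc : 0 < c.re) (hcu : ∀ k, 0 < (c + u k).re) (K : ℕ) (w : Fin q → ℂ) :
    ∫ y in (0:ℝ)..1, (((1 - y) ^ K : ℝ) : ℂ) * ∏ k, (c + u k * (y:ℂ)) ^ (w k)
    = (1/((K:ℂ)+1)) * (∏ k, c ^ (w k))
      + (1/((K:ℂ)+1)) * ∑ t, (w t * u t) *
          ∫ y in (0:ℝ)..1, (((1 - y) ^ (K+1) : ℝ) : ℂ) *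
            ∏ k, (c + u k * (y:ℂ)) ^ (Function.update w t (w t - 1) k) := by
  have hK1 : ((K:ℝ)+1) ≠ 0 := by positivity
  have hK1c : ((K:ℂ)+1) ≠ 0 := by
    intro h
    have := congrArg Complex.re h
    simp at this
    linarith [this]
  -- the auxiliary real function and its derivative
  set U : ℝ → ℂ := fun y => ((-(1 - y) ^ (K+1) / ((K:ℝ)+1) : ℝ) : ℂ) with hU
  have hUderiv : ∀ y : ℝ, HasDerivAt U (((1 - y) ^ K : ℝ) : ℂ) y := by
    intro y
    have h1 : HasDerivAt (fun x : ℝ => 1 - x) (-1) y := (hasDerivAt_id y).const_sub 1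
    have h2 : HasDerivAt (fun x : ℝ => -(1 - x) ^ (K+1) / ((K:ℝ)+1)) ((1 - y) ^ K) y := by
      have h3 := ((h1.pow (K+1)).div_const ((K:ℝ)+1)).neg
      have e : (fun x : ℝ => -(1 - x) ^ (K+1) / ((K:ℝ)+1))
          = -fun x => ((fun x => 1 - x) ^ (K + 1)) x / ((K:ℝ) + 1) := by
        funext x; simp only [Pi.neg_apply, Pi.pow_apply]; ring
      rw [e]
      refine h3.congr_deriv ?_
      · rw [Nat.add_sub_cancel]
        field_simp
        push_cast
        ring
    exact h2.ofReal_comp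
  have hV : ∀ y ∈ Set.uIcc (0:ℝ) 1,
      HasDerivAt (fun x : ℝ => ∏ k, (c + u k * (x:ℂ)) ^ (w k))
        ((fun y : ℝ => ∑ t, (w t * u t) *
          ∏ k, (c + u k * (y:ℂ)) ^ (Function.update w t (w t - 1) k)) y) y := by
    intro y hy
    rw [Set.uIcc_of_le zero_le_one] at hy
    exact hasDerivAt_g hc hcu w hy
  have hibp := intervalIntegral.integral_mul_deriv_eq_deriv_mul
    (u := U) (u' := fun y : ℝ => (((1 - y) ^ K : ℝ) : ℂ))
    (v := fun x : ℝ => ∏ k, (c + u k * (x:ℂ)) ^ (w k))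
    (v' := fun y : ℝ => ∑ t, (w t * u t) *
      ∏ k, (c + u k * (y:ℂ)) ^ (Function.update w t (w t - 1) k))
    (a := 0) (b := 1)
    (fun x _ => hUderiv x) hV
    (by
      apply ContinuousOn.intervalIntegrable
      exact (Complex.continuous_ofReal.comp
        ((continuous_const.sub continuous_id).pow K)).continuousOn)
    (intInt_gsum hc hcu w)
  -- hibp : ∫ U * v' = U 1 * v 1 - U 0 * v 0 - ∫ u' * v
  have hU1 : U 1 = 0 := by simp [hU]
  have hU0 : U 0 = -(1/((K:ℂ)+1)) := by
    simp only [hU]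
    push_cast
    norm_num
    ring
  have hg0 : (∏ k, (c + u k * ((0:ℝ):ℂ)) ^ (w k)) = ∏ k, c ^ (w k) := by
    refine Finset.prod_congr rfl fun k _ => ?_
    norm_num
  have hUv' : (∫ y in (0:ℝ)..1, U y * (∑ t, (w t * u t) *
        ∏ k, (c + u k * (y:ℂ)) ^ (Function.update w t (w t - 1) k)))
      = -(1/((K:ℂ)+1)) * ∑ t, (w t * u t) *
          ∫ y in (0:ℝ)..1, (((1 - y) ^ (K+1) : ℝ) : ℂ) *
            ∏ k, (c + u k * (y:ℂ)) ^ (Function.update w t (w t - 1) k) := by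
    have hptw : ∀ y : ℝ, U y * (∑ t, (w t * u t) *
        ∏ k, (c + u k * (y:ℂ)) ^ (Function.update w t (w t - 1) k))
        = ∑ t, (-(1/((K:ℂ)+1))) * ((w t * u t) * ((((1 - y) ^ (K+1) : ℝ) : ℂ) *
            ∏ k, (c + u k * (y:ℂ)) ^ (Function.update w t (w t - 1) k))) := by
      intro y
      rw [Finset.mul_sum]
      refine Finset.sum_congr rfl fun t _ => ?_
      have : U y = -(1/((K:ℂ)+1)) * (((1 - y) ^ (K+1) : ℝ) : ℂ) := by
        simp only [hU]
        push_cast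
        ring
      rw [this]
      ring
    rw [intervalIntegral.integral_congr (g := fun y => ∑ t, (-(1/((K:ℂ)+1))) *
      ((w t * u t) * ((((1 - y) ^ (K+1) : ℝ) : ℂ) *
        ∏ k, (c + u k * (y:ℂ)) ^ (Function.update w t (w t - 1) k)))) (fun y _ => hptw y)]
    rw [intervalIntegral.integral_finset_sum]
    · rw [Finset.mul_sum]
      refine Finset.sum_congr rfl fun t _ => ?_
      rw [← intervalIntegral.integral_const_mul, ← intervalIntegral.integral_const_mul]
    · intro t _
      exact (((intInt_poly_g hc hcu (K+1) (Function.update w t (w t - 1))).const_mul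
        (w t * u t)).const_mul (-(1/((K:ℂ)+1))))
  rw [hUv', hU1, hU0] at hibp
  rw [hg0] at hibp
  linear_combination hibp

end ibp

section partAmain

variable {q : ℕ} {c : ℂ} {u s : Fin q → ℂ}

lemma exp_update (s : Fin q → ℂ) (α : Fin q → ℕ) (t : Fin q) :
    Function.update (fun k => -(s k) - (α k : ℂ)) t ((fun k => -(s k) - (α k : ℂ)) t - 1)
      = fun k => -(s k) - ((Function.update α t (α t + 1)) k : ℂ) := by
  funext k
  rcases eq_or_ne k t with rfl | hk
  · simp only [Function.update_self]
    push_cast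
    ring
  · simp [Function.update_of_ne hk]

lemma Bzero : ((Fintype.piFinset fun _ : Fin q => Finset.range (0 + 1)).filter
    (fun α => ∑ k, α k = 0)) = {fun _ => 0} := by
  ext α
  simp only [Finset.mem_singleton]
  rw [mem_Bset]
  rw [Finset.sum_eq_zero_iff]
  constructor
  · intro h; funext k; exact h k (Finset.mem_univ k)
  · intro h k _; rw [h]

lemma Azero : ((Fintype.piFinset fun _ : Fin q => Finset.range (0 + 1)).filter
    (fun α => ∑ k, α k ≤ 0)) = {fun _ => 0} := by
  ext α
  simp only [Finset.mem_singleton]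
  rw [mem_Aset, Nat.le_zero, Finset.sum_eq_zero_iff]
  constructor
  · intro h; funext k; exact h k (Finset.mem_univ k)
  · intro h k _; rw [h]

lemma Asplit (K : ℕ) (f : (Fin q → ℕ) → ℂ) :
    ∑ α ∈ (Fintype.piFinset fun _ : Fin q => Finset.range (K + 2)).filter
        (fun α => ∑ k, α k ≤ K + 1), f α
    = (∑ α ∈ (Fintype.piFinset fun _ : Fin q => Finset.range (K + 1)).filter
        (fun α => ∑ k, α k ≤ K), f α)
      + ∑ α ∈ (Fintype.piFinset fun _ : Fin q => Finset.range (K + 2)).filter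
          (fun α => ∑ k, α k = K + 1), f α := by
  classical
  rw [← Finset.sum_union (by
    rw [Finset.disjoint_left]
    intro α h1 h2
    rw [mem_Aset] at h1
    rw [mem_Bset] at h2
    omega)]
  apply Finset.sum_congr _ (fun _ _ => rfl)
  ext α
  simp only [Finset.mem_union]
  rw [mem_Aset, mem_Aset, mem_Bset]
  omega

theorem partA (hc : 0 < c.re) (hcu : ∀ k, 0 < (c + u k).re) (K : ℕ) :
    ∏ k, (c + u k) ^ (-(s k)) =
      (∑ α ∈ (Fintype.piFinset fun _ : Fin q => Finset.range (K + 1)).filter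
          (fun α => ∑ k, α k ≤ K),
        (∏ k, cbinom (-(s k)) (α k)) * (∏ k, u k ^ α k) *
          ∏ k, c ^ (-(s k) - (α k : ℂ))) +
      ((K : ℂ) + 1) *
        ∑ α ∈ (Fintype.piFinset fun _ : Fin q => Finset.range (K + 2)).filter
            (fun α => ∑ k, α k = K + 1),
          (∏ k, cbinom (-(s k)) (α k)) * (∏ k, u k ^ α k) *
            ∫ y in (0:ℝ)..1, (((1 - y) ^ K : ℝ) : ℂ) *
              ∏ k, (c + u k * (y : ℂ)) ^ (-(s k) - (α k : ℂ)) := by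
  induction K with
  | zero =>
    set G : (Fin q → ℕ) → ℂ := fun β => ∫ y in (0:ℝ)..1, (((1 - y) ^ 0 : ℝ) : ℂ) *
        ∏ k, (c + u k * (y : ℂ)) ^ (-(s k) - (β k : ℂ)) with hG
    have hre := reindex s u 0 G
    rw [Bzero, Finset.sum_singleton] at hre
    rw [← hre, Azero, Finset.sum_singleton]
    -- FTC
    have hf : ∀ y ∈ Set.uIcc (0:ℝ) 1,
        HasDerivAt (fun x : ℝ => ∏ k, (c + u k * (x:ℂ)) ^ (-(s k)))
          ((fun y : ℝ => ∑ t, ((-(s t)) * u t) * ∏ k, (c + u k * (y:ℂ)) ^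
            (Function.update (fun k => -(s k)) t (-(s t) - 1) k)) y) y := by
      intro y hy
      rw [Set.uIcc_of_le zero_le_one] at hy
      exact hasDerivAt_g hc hcu (fun k => -(s k)) hy
    have hint := intervalIntegral.integral_eq_sub_of_hasDerivAt hf
      (intInt_gsum hc hcu (fun k => -(s k)))
    have h1 : (∏ k, (c + u k * ((1:ℝ):ℂ)) ^ (-(s k))) = ∏ k, (c + u k) ^ (-(s k)) := by
      refine Finset.prod_congr rfl fun k _ => ?_
      norm_num
    have h0 : (∏ k, (c + u k * ((0:ℝ):ℂ)) ^ (-(s k))) = ∏ k, c ^ (-(s k)) := by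
      refine Finset.prod_congr rfl fun k _ => ?_
      norm_num
    rw [h1, h0] at hint
    have hsplit : (∫ y in (0:ℝ)..1, ∑ t, ((-(s t)) * u t) * ∏ k, (c + u k * (y:ℂ)) ^
          (Function.update (fun k => -(s k)) t (-(s t) - 1) k))
        = ∑ t, ((-(s t)) * u t) * ∫ y in (0:ℝ)..1, ∏ k, (c + u k * (y:ℂ)) ^
          (Function.update (fun k => -(s k)) t (-(s t) - 1) k) := by
      rw [intervalIntegral.integral_finset_sum (fun t _ =>
        (ContinuousOn.intervalIntegrable (by
          rw [Set.uIcc_of_le zero_le_one]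
          exact ContinuousOn.mul continuousOn_const (contOn_g hc hcu _))))]
      exact Finset.sum_congr rfl fun t _ => intervalIntegral.integral_const_mul _ _
    rw [hsplit] at hint
    have hGt : ∀ t : Fin q, G (Function.update (fun _ => 0) t ((fun _ => (0:ℕ)) t + 1))
        = ∫ y in (0:ℝ)..1, ∏ k, (c + u k * (y:ℂ)) ^
          (Function.update (fun k => -(s k)) t (-(s t) - 1) k) := by
      intro t
      rw [hG]
      have hexp : (fun k => -(s k) - ((Function.update (fun _ => (0:ℕ)) t
            ((fun _ => (0:ℕ)) t + 1)) k : ℂ))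
          = Function.update (fun k => -(s k)) t (-(s t) - 1) := by
        funext k
        rcases eq_or_ne k t with rfl | hk
        · simp
        · simp [Function.update_of_ne hk]
      simp only [← hexp]
      refine intervalIntegral.integral_congr fun y _ => ?_
      norm_num
    have hint' : ∑ t, (-(s t) - (((fun _ => (0:ℕ)) t : ℕ) : ℂ)) * u t *
          G (Function.update (fun _ => 0) t ((fun _ => (0:ℕ)) t + 1))
        = ∏ k, (c + u k) ^ (-(s k)) - ∏ k, c ^ (-(s k)) := by
      rw [← hint]
      refine Finset.sum_congr rfl fun t _ => ?_
      rw [hGt t]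
      norm_num
    have hz : (∏ k, cbinom (-(s k)) ((fun _ => (0:ℕ)) k)) *
          (∏ k, u k ^ ((fun _ => (0:ℕ)) k)) *
          ∏ k, c ^ (-(s k) - (((fun _ => (0:ℕ)) k : ℕ) : ℂ))
        = ∏ k, c ^ (-(s k)) := by
      simp [cbinom_zero]
    rw [hz]
    have hz2 : (∏ k, cbinom (-(s k)) ((fun _ => (0:ℕ)) k)) *
          (∏ k, u k ^ ((fun _ => (0:ℕ)) k)) = 1 := by
      simp [cbinom_zero]
    rw [hz2, one_mul, hint']
    ring
  | succ K ih =>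
    rw [ih]
    rw [Asplit K (fun α => (∏ k, cbinom (-(s k)) (α k)) * (∏ k, u k ^ α k) *
      ∏ k, c ^ (-(s k) - (α k : ℂ)))]
    set G : (Fin q → ℕ) → ℂ := fun β => ∫ y in (0:ℝ)..1, (((1 - y) ^ (K+1) : ℝ) : ℂ) *
        ∏ k, (c + u k * (y : ℂ)) ^ (-(s k) - (β k : ℂ)) with hG
    have hre := reindex s u (K+1) G
    have key : ((K : ℂ) + 1) *
        ∑ α ∈ (Fintype.piFinset fun _ : Fin q => Finset.range (K + 2)).filter
            (fun α => ∑ k, α k = K + 1),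
          (∏ k, cbinom (-(s k)) (α k)) * (∏ k, u k ^ α k) *
            ∫ y in (0:ℝ)..1, (((1 - y) ^ K : ℝ) : ℂ) *
              ∏ k, (c + u k * (y : ℂ)) ^ (-(s k) - (α k : ℂ))
        = (∑ α ∈ (Fintype.piFinset fun _ : Fin q => Finset.range (K + 2)).filter
            (fun α => ∑ k, α k = K + 1),
            (∏ k, cbinom (-(s k)) (α k)) * (∏ k, u k ^ α k) *
              ∏ k, c ^ (-(s k) - (α k : ℂ)))
          + ∑ α ∈ (Fintype.piFinset fun _ : Fin q => Finset.range (K + 2)).filter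
              (fun α => ∑ k, α k = K + 1),
              (∏ k, cbinom (-(s k)) (α k)) * (∏ k, u k ^ α k) *
                (∑ t, (-(s t) - (α t : ℂ)) * u t * G (Function.update α t (α t + 1))) := by
      rw [Finset.mul_sum, ← Finset.sum_add_distrib]
      refine Finset.sum_congr rfl fun α hα => ?_
      have hK1c : ((K:ℂ)+1) ≠ 0 := by
        intro h
        have := congrArg Complex.re h
        simp at this
        linarith [this]
      have hibp := ibp_step hc hcu K (fun k => -(s k) - (α k : ℂ))
      rw [hibp]
      have hG' : ∀ t : Fin q, (∫ y in (0:ℝ)..1, (((1 - y) ^ (K+1) : ℝ) : ℂ) *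
            ∏ k, (c + u k * (y:ℂ)) ^
              (Function.update (fun k => -(s k) - (α k : ℂ)) t (-(s t) - (α t : ℂ) - 1) k))
          = G (Function.update α t (α t + 1)) := by
        intro t
        rw [hG]
        have := exp_update s α t
        simp only at this
        rw [this]
      have hsum : (∑ t, ((-(s t) - (α t : ℂ)) * u t) *
            ∫ y in (0:ℝ)..1, (((1 - y) ^ (K+1) : ℝ) : ℂ) *
              ∏ k, (c + u k * (y:ℂ)) ^
                (Function.update (fun k => -(s k) - (α k : ℂ)) t (-(s t) - (α t : ℂ) - 1) k))
          = ∑ t, (-(s t) - (α t : ℂ)) * u t * G (Function.update α t (α t + 1)) := by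
        refine Finset.sum_congr rfl fun t _ => ?_
        rw [hG' t]
      rw [hsum]
      field_simp
    rw [key, hre]
    simp only [hG]
    ring

section partB

lemma prod_cpow_sum (c : ℂ) (hc : c ≠ 0) {ι : Type*} (t : Finset ι) (f : ι → ℂ) :
    ∏ i ∈ t, c ^ f i = c ^ (∑ i ∈ t, f i) := by
  classical
  induction t using Finset.cons_induction with
  | empty => simp
  | cons a t ha ih =>
    rw [Finset.prod_cons, Finset.sum_cons, ih, ← Complex.cpow_add _ _ hc]

lemma cpow_mul_ofReal_pos {x : ℂ} (hx : x ≠ 0) {r : ℝ} (hr : 0 < r) (z : ℂ) :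
    (x * (r:ℂ)) ^ z = x ^ z * (r:ℂ) ^ z := by
  have hr0 : (r:ℂ) ≠ 0 := Complex.ofReal_ne_zero.2 hr.ne'
  rw [Complex.cpow_def_of_ne_zero (mul_ne_zero hx hr0),
    Complex.log_mul_ofReal r hr x hx, add_mul, Complex.exp_add,
    Complex.cpow_def_of_ne_zero hx, Complex.cpow_def_of_ne_zero hr0,
    ← Complex.ofReal_log hr.le]
  ring

lemma summable_shift_cpow {W : ℂ} (hW : 1 < W.re) :
    Summable (fun m : ℕ => ((m:ℂ) + 1) ^ (-W)) := by
  have h1 : Summable (fun n : ℕ => 1 / ((n:ℂ)) ^ W) := Complex.summable_one_div_nat_cpow.2 hW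
  have h2 : Summable (fun n : ℕ => 1 / (((n + 1 : ℕ):ℂ)) ^ W) :=
    (summable_nat_add_iff (f := fun n : ℕ => 1 / ((n:ℂ)) ^ W) 1).2 h1
  refine h2.congr fun m => ?_
  rw [Complex.cpow_neg, one_div]
  push_cast
  rfl

lemma tsum_shift_zeta {γ : ℂ} (hγ : 0 < γ.re) {W : ℂ} (hW : 1 < W.re) :
    ∑' m : ℕ, (γ * ((m:ℂ) + 1)) ^ (-W) = γ ^ (-W) * riemannZeta W := by
  have hγ0 : γ ≠ 0 := by intro h; rw [h] at hγ; simp at hγ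
  have hsplit : ∀ m : ℕ, (γ * ((m:ℂ) + 1)) ^ (-W) = γ ^ (-W) * ((m:ℂ) + 1) ^ (-W) := by
    intro m
    have hcast : ((m:ℂ) + 1) = (((m + 1 : ℕ) : ℝ) : ℂ) := by push_cast; ring
    rw [hcast, cpow_mul_ofReal_pos hγ0 (by positivity) (-W)]
  rw [tsum_congr hsplit, tsum_mul_left]
  congr 1
  rw [zeta_eq_tsum_one_div_nat_add_one_cpow hW]
  exact tsum_congr fun n => by rw [Complex.cpow_neg, one_div]

lemma summable_cpow_shift_full {γ : ℂ} (hγ : 0 < γ.re) {W : ℂ} (hW : 1 < W.re) :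
    Summable (fun m : ℕ => (γ * ((m:ℂ) + 1)) ^ (-W)) := by
  have hγ0 : γ ≠ 0 := by intro h; rw [h] at hγ; simp at hγ
  refine ((summable_shift_cpow hW).mul_left (γ ^ (-W))).congr fun m => ?_
  have hcast : ((m:ℂ) + 1) = (((m + 1 : ℕ) : ℝ) : ℂ) := by push_cast; ring
  rw [hcast, cpow_mul_ofReal_pos hγ0 (by positivity) (-W)]

end partB

section bound

lemma factor_bound {γ uk : ℂ} (hγ : 0 < γ.re) (huk : 0 < (uk + γ).re) (v : ℂ) (m : ℕ)
    {y : ℝ} (hy : y ∈ Set.Icc (0:ℝ) 1) :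
    ‖(γ * ((m:ℂ) + 1) + uk * (y:ℂ)) ^ v‖ ≤
      (Real.exp (Real.pi * |v.im|) *
        max ((min γ.re (γ.re + uk.re)) ^ v.re) ((‖γ‖ + ‖uk‖) ^ v.re)) *
        ((m:ℝ) + 1) ^ v.re := by
  set δ : ℝ := min γ.re (γ.re + uk.re) with hδdef
  have hδ : 0 < δ := by
    apply lt_min hγ
    rw [Complex.add_re] at huk
    linarith
  set Cc : ℝ := ‖γ‖ + ‖uk‖ with hCdef
  have hδC : δ ≤ Cc := by
    have h1 : δ ≤ γ.re := min_le_left _ _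
    have h2 : γ.re ≤ ‖γ‖ := Complex.re_le_norm γ
    have h3 : (0:ℝ) ≤ ‖uk‖ := norm_nonneg uk
    simp only [hCdef]
    linarith
  have hC : 0 < Cc := lt_of_lt_of_le hδ hδC
  set z : ℂ := γ * ((m:ℂ) + 1) + uk * (y:ℂ) with hzdef
  have hm1 : (0:ℝ) < (m:ℝ) + 1 := by positivity
  have hzre : ((m:ℝ) + 1) * δ ≤ z.re := by
    have hz : z.re = γ.re * ((m:ℝ) + 1) + uk.re * y := by
      simp [hzdef, Complex.add_re, Complex.mul_re, Complex.ofReal_re, Complex.ofReal_im,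
        Complex.natCast_re, Complex.natCast_im, Complex.add_im, Complex.one_re, Complex.one_im]
    rw [hz]
    have h1 : δ ≤ γ.re := min_le_left _ _
    have h2 : δ ≤ γ.re + uk.re := min_le_right _ _
    nlinarith [mul_nonneg (show (0:ℝ) ≤ (m:ℝ) + 1 - y by linarith [hy.2])
        (show (0:ℝ) ≤ γ.re - δ by linarith),
      mul_nonneg hy.1 (show (0:ℝ) ≤ γ.re + uk.re - δ by linarith)]
  have hlow : ((m:ℝ) + 1) * δ ≤ ‖z‖ := le_trans hzre (Complex.re_le_norm z)
  have hup : ‖z‖ ≤ ((m:ℝ) + 1) * Cc := by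
    have h1 : ‖z‖ ≤ ‖γ * ((m:ℂ) + 1)‖ + ‖uk * (y:ℂ)‖ :=
      norm_add_le _ _
    have h2 : ‖γ * ((m:ℂ) + 1)‖ = ‖γ‖ * ((m:ℝ) + 1) := by
      rw [norm_mul]
      congr 1
      rw [show ((m:ℂ) + 1) = ((((m:ℝ) + 1) : ℝ) : ℂ) by push_cast; ring, Complex.norm_real,
        Real.norm_eq_abs,
        abs_of_pos hm1]
    have h3 : ‖uk * (y:ℂ)‖ ≤ ‖uk‖ := by
      rw [norm_mul, Complex.norm_real, Real.norm_eq_abs, _root_.abs_of_nonneg hy.1]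
      exact mul_le_of_le_one_right (norm_nonneg uk) hy.2
    have h4 : (0:ℝ) ≤ ‖uk‖ := norm_nonneg uk
    have h5 : (0:ℝ) ≤ (m:ℝ) := Nat.cast_nonneg m
    simp only [hCdef]
    nlinarith [mul_nonneg h5 h4]
  have habs : ‖z ^ v‖ ≤ ‖z‖ ^ v.re / Real.exp (Complex.arg z * v.im) :=
    Complex.norm_cpow_le z v
  have hrpow_nonneg : (0:ℝ) ≤ ‖z‖ ^ v.re := Real.rpow_nonneg (norm_nonneg z) _
  have h5 : ‖z‖ ^ v.re / Real.exp (Complex.arg z * v.im) ≤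
      ‖z‖ ^ v.re * Real.exp (Real.pi * |v.im|) := by
    rw [div_le_iff₀ (Real.exp_pos _)]
    have hexp : (1:ℝ) ≤ Real.exp (Real.pi * |v.im|) * Real.exp (Complex.arg z * v.im) := by
      rw [← Real.exp_add]
      refine le_trans (le_of_eq Real.exp_zero.symm) (Real.exp_le_exp.2 ?_)
      have h6 : |Complex.arg z * v.im| ≤ Real.pi * |v.im| := by
        rw [abs_mul]
        exact mul_le_mul_of_nonneg_right (Complex.abs_arg_le_pi z) (abs_nonneg _)
      have h7 := neg_abs_le (Complex.arg z * v.im)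
      linarith
    calc ‖z‖ ^ v.re = ‖z‖ ^ v.re * 1 := (mul_one _).symm
      _ ≤ ‖z‖ ^ v.re * (Real.exp (Real.pi * |v.im|) *
            Real.exp (Complex.arg z * v.im)) := mul_le_mul_of_nonneg_left hexp hrpow_nonneg
      _ = ‖z‖ ^ v.re * Real.exp (Real.pi * |v.im|) *
            Real.exp (Complex.arg z * v.im) := (mul_assoc _ _ _).symm
  have h7 : ‖z‖ ^ v.re ≤ max (δ ^ v.re) (Cc ^ v.re) * ((m:ℝ) + 1) ^ v.re := by
    rcases le_or_gt 0 v.re with hv | hv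
    · calc ‖z‖ ^ v.re ≤ (((m:ℝ) + 1) * Cc) ^ v.re :=
          Real.rpow_le_rpow (norm_nonneg z) hup hv
        _ = ((m:ℝ) + 1) ^ v.re * Cc ^ v.re := Real.mul_rpow hm1.le hC.le
        _ ≤ ((m:ℝ) + 1) ^ v.re * max (δ ^ v.re) (Cc ^ v.re) :=
          mul_le_mul_of_nonneg_left (le_max_right _ _) (Real.rpow_nonneg hm1.le _)
        _ = _ := mul_comm _ _
    · calc ‖z‖ ^ v.re ≤ (((m:ℝ) + 1) * δ) ^ v.re :=
          Real.rpow_le_rpow_of_nonpos (by positivity) hlow hv.le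
        _ = ((m:ℝ) + 1) ^ v.re * δ ^ v.re := Real.mul_rpow hm1.le hδ.le
        _ ≤ ((m:ℝ) + 1) ^ v.re * max (δ ^ v.re) (Cc ^ v.re) :=
          mul_le_mul_of_nonneg_left (le_max_left _ _) (Real.rpow_nonneg hm1.le _)
        _ = _ := mul_comm _ _
  calc ‖z ^ v‖ ≤ ‖z‖ ^ v.re * Real.exp (Real.pi * |v.im|) :=
        le_trans habs h5
    _ ≤ (max (δ ^ v.re) (Cc ^ v.re) * ((m:ℝ) + 1) ^ v.re) * Real.exp (Real.pi * |v.im|) :=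
        mul_le_mul_of_nonneg_right h7 (Real.exp_pos _).le
    _ = (Real.exp (Real.pi * |v.im|) * max (δ ^ v.re) (Cc ^ v.re)) * ((m:ℝ) + 1) ^ v.re := by
        ring

end bound

section remainder

lemma summable_remainder {q : ℕ} {γ : ℂ} {u s : Fin q → ℂ} (hγ : 0 < γ.re)
    (hu : ∀ k, 0 < (u k + γ).re) (hs : 1 < (∑ k, s k).re) (K : ℕ) (α : Fin q → ℕ)
    (hα : ∑ k, α k = K + 1) :
    Summable (fun m : ℕ => ∫ y in (0:ℝ)..1, (((1 - y) ^ K : ℝ) : ℂ) *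
      ∏ k, (γ * ((m:ℂ) + 1) + u k * (y:ℂ)) ^ (-(s k) - (α k : ℂ))) := by
  classical
  set E : Fin q → ℝ := fun k => Real.exp (Real.pi * |(-(s k) - (α k : ℂ)).im|) *
    max ((min γ.re (γ.re + (u k).re)) ^ ((-(s k) - (α k : ℂ)).re))
      ((‖γ‖ + ‖u k‖) ^ ((-(s k) - (α k : ℂ)).re)) with hEdef
  have hE : ∀ k, 0 ≤ E k := by
    intro k
    refine mul_nonneg (Real.exp_pos _).le (le_trans ?_ (le_max_left _ _))
    have hδ : 0 < min γ.re (γ.re + (u k).re) := by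
      apply lt_min hγ
      have := hu k
      rw [Complex.add_re] at this
      linarith
    exact Real.rpow_nonneg hδ.le _
  set D : ℝ := ∏ k, E k with hDdef
  have hD : 0 ≤ D := Finset.prod_nonneg fun k _ => hE k
  set r : ℝ := ∑ k, (-(s k) - (α k : ℂ)).re with hrdef
  have hr : r = -(∑ k, s k).re - ((K:ℝ) + 1) := by
    have h1 : ∀ k : Fin q, (-(s k) - (α k : ℂ)).re = -(s k).re - (α k : ℝ) := by
      intro k
      simp [Complex.sub_re, Complex.neg_re, Complex.natCast_re]
    rw [hrdef, Finset.sum_congr rfl fun k _ => h1 k, Finset.sum_sub_distrib]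
    have h2 : (∑ k, s k).re = ∑ k, (s k).re := Complex.re_sum _ _
    have h3 : ∑ k, ((α k : ℕ) : ℝ) = ((K:ℝ) + 1) := by
      rw [← Nat.cast_sum, hα]
      push_cast
      ring
    rw [h2, h3, Finset.sum_neg_distrib]
  have hrlt : r < -1 := by
    rw [hr]
    have : (0:ℝ) ≤ (K:ℝ) := Nat.cast_nonneg K
    linarith
  have hbound : ∀ m : ℕ, ‖∫ y in (0:ℝ)..1, (((1 - y) ^ K : ℝ) : ℂ) *
      ∏ k, (γ * ((m:ℂ) + 1) + u k * (y:ℂ)) ^ (-(s k) - (α k : ℂ))‖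
      ≤ D * ((m:ℝ) + 1) ^ r := by
    intro m
    have hm1 : (0:ℝ) < (m:ℝ) + 1 := by positivity
    have hC : ∀ y ∈ Set.uIoc (0:ℝ) 1, ‖(((1 - y) ^ K : ℝ) : ℂ) *
        ∏ k, (γ * ((m:ℂ) + 1) + u k * (y:ℂ)) ^ (-(s k) - (α k : ℂ))‖
        ≤ D * ((m:ℝ) + 1) ^ r := by
      intro y hy'
      rw [Set.uIoc_of_le zero_le_one] at hy'
      have hy : y ∈ Set.Icc (0:ℝ) 1 := ⟨hy'.1.le, hy'.2⟩
      rw [norm_mul, norm_prod]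
      have h1 : ‖(((1 - y) ^ K : ℝ) : ℂ)‖ ≤ 1 := by
        rw [Complex.norm_real, Real.norm_eq_abs]
        rw [_root_.abs_of_nonneg (pow_nonneg (by linarith [hy.2]) K)]
        exact pow_le_one₀ (by linarith [hy.2]) (by linarith [hy.1])
      have h2 : (∏ k, ‖(γ * ((m:ℂ) + 1) + u k * (y:ℂ)) ^ (-(s k) - (α k : ℂ))‖)
          ≤ ∏ k, (E k * ((m:ℝ) + 1) ^ ((-(s k) - (α k : ℂ)).re)) := by
        refine Finset.prod_le_prod (fun k _ => norm_nonneg _) (fun k _ => ?_)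
        exact factor_bound hγ (hu k) _ m hy
      have h3 : (∏ k, (E k * ((m:ℝ) + 1) ^ ((-(s k) - (α k : ℂ)).re)))
          = D * ((m:ℝ) + 1) ^ r := by
        rw [Finset.prod_mul_distrib, hrdef, Real.rpow_sum_of_pos hm1, hDdef]
      calc ‖(((1 - y) ^ K : ℝ) : ℂ)‖ *
            ∏ k, ‖(γ * ((m:ℂ) + 1) + u k * (y:ℂ)) ^ (-(s k) - (α k : ℂ))‖
          ≤ 1 * (D * ((m:ℝ) + 1) ^ r) := by
            refine mul_le_mul h1 (le_of_le_of_eq h2 h3)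
              (Finset.prod_nonneg fun k _ => norm_nonneg _) zero_le_one
        _ = D * ((m:ℝ) + 1) ^ r := one_mul _
    have := intervalIntegral.norm_integral_le_of_norm_le_const hC
    simpa using this
  have hb : Summable (fun m : ℕ => D * ((m:ℝ) + 1) ^ r) := by
    have h1 : Summable (fun n : ℕ => (n:ℝ) ^ r) := Real.summable_nat_rpow.2 hrlt
    have h2 := (summable_nat_add_iff (f := fun n : ℕ => (n:ℝ) ^ r) 1).2 h1
    refine (h2.congr fun m => ?_).mul_left D
    push_cast
    rfl
  exact Summable.of_norm_bounded hb hbound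

end remainder




/-- the case `n = 1` Taylor expansion of `Z_{1,q}` in terms of the Riemann
zeta-function, with the explicit remainder `R_K`. The finsets over which `α` ranges are
exactly `{α ∈ ℕ₀^q : |α| ≤ K}` and `{α ∈ ℕ₀^q : |α| = K+1}`. -/
theorem stmt13 (q : ℕ) (hq : 1 ≤ q) (γ : ℂ) (u : Fin q → ℂ)
    (hγ : 0 < γ.re) (hu : ∀ k, 0 < (u k + γ).re) (K : ℕ)
    (s : Fin q → ℂ) (hs : 1 < (∑ k, s k).re) :
    (∑' m : ℕ, ∏ k, (γ * ((m : ℂ) + 1) + u k) ^ (-(s k))) =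
      (∑ α ∈ (Fintype.piFinset fun _ : Fin q => Finset.range (K + 1)).filter
          fun α => ∑ k, α k ≤ K,
        (∏ k, cbinom (-(s k)) (α k)) * (∏ k, u k ^ α k) *
          γ ^ (-(∑ k, s k) - ∑ k, (α k : ℂ)) *
          riemannZeta ((∑ k, s k) + ∑ k, (α k : ℂ))) +
      ((K : ℂ) + 1) *
        ∑ α ∈ (Fintype.piFinset fun _ : Fin q => Finset.range (K + 2)).filter
            fun α => ∑ k, α k = K + 1,
          (∏ k, cbinom (-(s k)) (α k)) * (∏ k, u k ^ α k) *
            ∑' m : ℕ, ∫ y in (0 : ℝ)..1,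
              (((1 - y) ^ K : ℝ) : ℂ) *
                ∏ k, (γ * ((m : ℂ) + 1) + u k * (y : ℂ)) ^ (-(s k) - (α k : ℂ)) := by
  
  classical
  have hγ0 : γ ≠ 0 := by intro h; rw [h] at hγ; simp at hγ
  have hre : ∀ m : ℕ, (γ * ((m:ℂ) + 1)).re = γ.re * ((m:ℝ) + 1) := by
    intro m
    simp [Complex.mul_re, Complex.natCast_re, Complex.natCast_im, Complex.add_re,
      Complex.add_im, Complex.one_re, Complex.one_im]
  have hc : ∀ m : ℕ, 0 < (γ * ((m:ℂ) + 1)).re := by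
    intro m
    rw [hre m]
    positivity
  have hcu : ∀ (m : ℕ) (k : Fin q), 0 < (γ * ((m:ℂ) + 1) + u k).re := by
    intro m k
    have h2 := hu k
    rw [Complex.add_re] at h2
    rw [Complex.add_re, hre m]
    have h3 : (0:ℝ) ≤ (m:ℝ) := Nat.cast_nonneg m
    nlinarith [mul_nonneg h3 hγ.le]
  have hne : ∀ m : ℕ, γ * ((m:ℂ) + 1) ≠ 0 := by
    intro m h
    have := hc m
    rw [h] at this
    simp at this
  have hW : ∀ α : Fin q → ℕ, 1 < ((∑ k, s k) + ∑ k, (α k : ℂ)).re := by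
    intro α
    have h1 : (∑ k, (α k : ℂ)) = ((∑ k, α k : ℕ) : ℂ) := by push_cast; rfl
    rw [Complex.add_re, h1, Complex.natCast_re]
    have : (0:ℝ) ≤ ((∑ k, α k : ℕ) : ℝ) := Nat.cast_nonneg _
    linarith
  have hpt := fun m : ℕ => partA (s := s) (hc m) (hcu m) K
  rw [tsum_congr hpt]
  have hAsummand : ∀ (α : Fin q → ℕ) (m : ℕ),
      (∏ k, (γ * ((m:ℂ) + 1)) ^ (-(s k) - (α k : ℂ)))
        = (γ * ((m:ℂ) + 1)) ^ (-((∑ k, s k) + ∑ k, (α k : ℂ))) := by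
    intro α m
    rw [prod_cpow_sum _ (hne m) Finset.univ]
    congr 1
    rw [Finset.sum_sub_distrib, Finset.sum_neg_distrib]
    ring
  have hAsum : ∀ α ∈ (Fintype.piFinset fun _ : Fin q => Finset.range (K + 1)).filter
      (fun α => ∑ k, α k ≤ K), Summable (fun m : ℕ =>
        (∏ k, cbinom (-(s k)) (α k)) * (∏ k, u k ^ α k) *
          ∏ k, (γ * ((m:ℂ) + 1)) ^ (-(s k) - (α k : ℂ))) := by
    intro α _
    refine ((summable_cpow_shift_full hγ (hW α)).mul_left
      ((∏ k, cbinom (-(s k)) (α k)) * (∏ k, u k ^ α k))).congr fun m => ?_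
    rw [hAsummand α m]
  have hBsum : ∀ α ∈ (Fintype.piFinset fun _ : Fin q => Finset.range (K + 2)).filter
      (fun α => ∑ k, α k = K + 1), Summable (fun m : ℕ =>
        (∏ k, cbinom (-(s k)) (α k)) * (∏ k, u k ^ α k) *
          ∫ y in (0:ℝ)..1, (((1 - y) ^ K : ℝ) : ℂ) *
            ∏ k, (γ * ((m:ℂ) + 1) + u k * (y:ℂ)) ^ (-(s k) - (α k : ℂ))) := by
    intro α hα
    exact (summable_remainder hγ hu hs K α (mem_Bset.1 hα)).mul_left _
  have hA : Summable (fun m : ℕ =>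
      ∑ α ∈ (Fintype.piFinset fun _ : Fin q => Finset.range (K + 1)).filter
        (fun α => ∑ k, α k ≤ K),
        (∏ k, cbinom (-(s k)) (α k)) * (∏ k, u k ^ α k) *
          ∏ k, (γ * ((m:ℂ) + 1)) ^ (-(s k) - (α k : ℂ))) := summable_sum hAsum
  have hB : Summable (fun m : ℕ => ((K:ℂ) + 1) *
      ∑ α ∈ (Fintype.piFinset fun _ : Fin q => Finset.range (K + 2)).filter
        (fun α => ∑ k, α k = K + 1),
        (∏ k, cbinom (-(s k)) (α k)) * (∏ k, u k ^ α k) *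
          ∫ y in (0:ℝ)..1, (((1 - y) ^ K : ℝ) : ℂ) *
            ∏ k, (γ * ((m:ℂ) + 1) + u k * (y:ℂ)) ^ (-(s k) - (α k : ℂ))) :=
    (summable_sum hBsum).mul_left _
  rw [hA.tsum_add hB]
  congr 1
  · rw [Summable.tsum_finsetSum hAsum]
    refine Finset.sum_congr rfl fun α hα => ?_
    rw [tsum_congr (fun m : ℕ => by rw [hAsummand α m]), tsum_mul_left,
      tsum_shift_zeta hγ (hW α)]
    rw [show -((∑ k, s k) + ∑ k, (α k : ℂ)) = -(∑ k, s k) - ∑ k, (α k : ℂ) from by ring]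
    ring
  · rw [tsum_mul_left]
    congr 1
    rw [Summable.tsum_finsetSum hBsum]
    exact Finset.sum_congr rfl fun α hα => tsum_mul_left
end partAmain
end
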